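/- Let k, d ≥ 1, let 𝓗 be a finite set of k-hypergraphs of dimension d, and let H = (V, μ) be a k-hypergraph of dimension d. Then H ∈ Σ_ℤ(Eqs(𝓗)) if and only if H is locally a ℤ-sum of 𝓗, i.e. for every subset X ⊆ V with |X| ≤ k, the weight w_X(H) lies in the ℤ-span of { w_{X′}(H′) : H′ = (V′, μ′) ∈ 𝓗, X′ ⊆ V′, |X′| = |X| }. -/

import Mathlib

/-- A hypergraph (of dimension `d`) over the data domain `ℕ`, represented by its
weight function: a finitely supported function from finite sets of data values
(potential hyperedges) to weight vectors in `ℤ^d`.  Isolated vertices are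
irrelevant (hypergraphs are identified up to isolated vertices). -/
abbrev HG (d : ℕ) := (Finset ℕ) →₀ (Fin d → ℤ)

/-- `H` is a `k`-hypergraph: every hyperedge (set with nonzero weight) has `k` elements. -/
def IsHG (k : ℕ) {d : ℕ} (H : HG d) : Prop := ∀ e ∈ H.support, e.card = k

/-- The (non-isolated) vertices of `H`: the union of its hyperedges. -/
def verts {d : ℕ} (H : HG d) : Finset ℕ := H.support.sup id

/-- The weight `w_X(H)` of a finite set `X`: the sum of the weights of all
hyperedges of `H` that contain `X`. -/
def weight {d : ℕ} (X : Finset ℕ) (H : HG d) : Fin d → ℤ :=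
  ∑ e ∈ H.support.filter (fun e => X ⊆ e), H e
/-- Two hypergraphs are equivalent if (after discarding isolated vertices) they
differ by a permutation of the data domain. -/
def HGEquiv {d : ℕ} (H₁ H₂ : HG d) : Prop :=
  ∃ π : ℕ ≃ ℕ, ∀ e : Finset ℕ, H₂ (e.image π) = H₁ e

/-- All hypergraphs equivalent to a member of the family `𝒢`. -/
def Eqs {d : ℕ} (𝒢 : Set (HG d)) : Set (HG d) := {H | ∃ G ∈ 𝒢, HGEquiv G H}

/-- `Σ_ℤ(𝒢)`: all finite `ℤ`-linear combinations of members of `𝒢`. -/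
def Zsum {d : ℕ} (𝒢 : Set (HG d)) : Set (HG d) :=
  {H | ∃ (l : ℕ) (c : Fin l → ℤ) (F : Fin l → HG d),
      (∀ i, F i ∈ 𝒢) ∧ H = ∑ i, c i • F i}

namespace ZS
variable {d : ℕ}

/-- renaming of a hypergraph along a permutation of the data domain -/
noncomputable def ren (π : ℕ ≃ ℕ) (H : HG d) : HG d :=
  Finsupp.equivMapDomain (Equiv.finsetCongr π) H

@[simp] lemma ren_apply (π : ℕ ≃ ℕ) (H : HG d) (e : Finset ℕ) :
    ren π H e = H (e.image π.symm) := by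
  simp [ren, Finsupp.equivMapDomain_apply, Equiv.finsetCongr_symm, Equiv.finsetCongr_apply,
    Finset.map_eq_image]

lemma ren_apply_image (π : ℕ ≃ ℕ) (H : HG d) (e : Finset ℕ) :
    ren π H (e.image π) = H e := by
  simp [ren_apply, Finset.image_image]

lemma ren_ren (π τ : ℕ ≃ ℕ) (H : HG d) :
    ren π (ren τ H) = ren (τ.trans π) H := by
  have hc : ⇑(τ.trans π).symm = ⇑τ.symm ∘ ⇑π.symm := rfl
  ext e
  simp [ren_apply, Finset.image_image, hc]

@[simp] lemma ren_add (π : ℕ ≃ ℕ) (H₁ H₂ : HG d) :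
    ren π (H₁ + H₂) = ren π H₁ + ren π H₂ := by
  ext e; simp

@[simp] lemma ren_sub (π : ℕ ≃ ℕ) (H₁ H₂ : HG d) :
    ren π (H₁ - H₂) = ren π H₁ - ren π H₂ := by
  ext e; simp

@[simp] lemma ren_smul (π : ℕ ≃ ℕ) (c : ℤ) (H : HG d) :
    ren π (c • H) = c • ren π H := by
  ext e; simp

lemma mem_support_ren (π : ℕ ≃ ℕ) (H : HG d) (e : Finset ℕ) :
    e ∈ (ren π H).support ↔ e.image π.symm ∈ H.support := by
  simp [Finsupp.mem_support_iff]

lemma mem_verts {H : HG d} {e : Finset ℕ} (he : e ∈ H.support) {x : ℕ} (hx : x ∈ e) :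
    x ∈ verts H := by
  have : e ≤ verts H := Finset.le_sup (f := id) he
  exact this hx

lemma subset_verts {H : HG d} {e : Finset ℕ} (he : e ∈ H.support) : e ⊆ verts H :=
  fun _ hx => mem_verts he hx

lemma eval_eq_zero_of_not_subset_verts {H : HG d} {e : Finset ℕ} (h : ¬ e ⊆ verts H) :
    H e = 0 := by
  by_contra hne
  exact h (subset_verts (Finsupp.mem_support_iff.mpr hne))

lemma eval_eq_zero_of_mem_not_verts {H : HG d} {e : Finset ℕ} {x : ℕ}
    (hx : x ∈ e) (hv : x ∉ verts H) : H e = 0 :=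
  eval_eq_zero_of_not_subset_verts (fun h => hv (h hx))

lemma verts_ren (π : ℕ ≃ ℕ) (H : HG d) : verts (ren π H) = (verts H).image π := by
  ext x
  simp only [verts, Finset.mem_sup, Finset.mem_image]
  constructor
  · rintro ⟨e, he, hx⟩
    rw [mem_support_ren] at he
    exact ⟨π.symm x, ⟨_, he, by simpa using Finset.mem_image_of_mem π.symm hx⟩, by simp⟩
  · rintro ⟨y, ⟨e, he, hy⟩, rfl⟩
    refine ⟨e.image π, ?_, Finset.mem_image_of_mem π hy⟩
    rw [mem_support_ren]
    simpa [Finset.image_image] using he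

/-- a permutation fixing the vertices pointwise fixes the hypergraph -/
lemma ren_eq_self_of_fix {π : ℕ ≃ ℕ} {H : HG d} (h : ∀ x ∈ verts H, π x = x) :
    ren π H = H := by
  have hsymm : ∀ x ∈ verts H, π.symm x = x := by
    intro x hx
    conv_lhs => rw [← h x hx]
    simp
  have key : ∀ (f : ℕ → ℕ), (∀ x ∈ verts H, f x = x) → ∀ s : Finset ℕ, s ⊆ verts H →
      s.image f = s := by
    intro f hf s hs
    rw [Finset.image_congr (g := id), Finset.image_id]
    intro x hx
    exact hf x (hs hx)
  ext e
  rw [ren_apply]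
  by_cases h1 : e ∈ H.support
  · rw [key π.symm hsymm e (subset_verts h1)]
  · by_cases h2 : e.image π.symm ∈ H.support
    · exfalso
      have : (e.image π.symm).image π = e.image π.symm :=
        key π h (e.image π.symm) (subset_verts h2)
      have : e = e.image π.symm := by
        conv_lhs => rw [show e = (e.image π.symm).image π by simp [Finset.image_image]]
        exact this
      rw [← this] at h2
      exact h1 h2
    · rw [Finsupp.notMem_support_iff.mp h1, Finsupp.notMem_support_iff.mp h2]


/-! ### weight as a linear map -/

noncomputable def weightL (X : Finset ℕ) : HG d →ₗ[ℤ] (Fin d → ℤ) :=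
  Finsupp.lsum ℤ (fun e => if X ⊆ e then (LinearMap.id : (Fin d → ℤ) →ₗ[ℤ] (Fin d → ℤ)) else 0)

lemma weight_eq_weightL (X : Finset ℕ) (H : HG d) : weight X H = weightL X H := by
  rw [weight, weightL]
  rw [Finsupp.lsum_apply]
  rw [Finsupp.sum]
  rw [Finset.sum_filter]
  apply Finset.sum_congr rfl
  intro e _
  by_cases h : X ⊆ e <;> simp [h]

lemma weight_add (X : Finset ℕ) (H₁ H₂ : HG d) :
    weight X (H₁ + H₂) = weight X H₁ + weight X H₂ := by
  simp [weight_eq_weightL]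

lemma weight_sub (X : Finset ℕ) (H₁ H₂ : HG d) :
    weight X (H₁ - H₂) = weight X H₁ - weight X H₂ := by
  simp [weight_eq_weightL]

lemma weight_smul (X : Finset ℕ) (c : ℤ) (H : HG d) :
    weight X (c • H) = c • weight X H := by
  simp [weight_eq_weightL]

lemma weight_zero (X : Finset ℕ) : weight X (0 : HG d) = 0 := by
  simp [weight_eq_weightL]

lemma weight_eq_zero_of_no_edge {X : Finset ℕ} {H : HG d}
    (h : ∀ e ∈ H.support, ¬ X ⊆ e) : weight X H = 0 := by
  rw [weight]
  rw [Finset.filter_false_of_mem h]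
  simp

lemma exists_edge_of_weight_ne_zero {X : Finset ℕ} {H : HG d}
    (h : weight X H ≠ 0) : ∃ e ∈ H.support, X ⊆ e := by
  by_contra hc
  push_neg at hc
  exact h (weight_eq_zero_of_no_edge hc)

lemma weight_ren (π : ℕ ≃ ℕ) (X : Finset ℕ) (H : HG d) :
    weight X (ren π H) = weight (X.image π.symm) H := by
  rw [weight, weight]
  apply Finset.sum_bij (i := fun e _ => e.image π.symm)
  · intro e he
    simp only [Finset.mem_filter] at he ⊢
    refine ⟨(mem_support_ren π H e).mp he.1, ?_⟩
    intro x hx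
    obtain ⟨y, hy, rfl⟩ := Finset.mem_image.mp hx
    exact Finset.mem_image_of_mem _ (he.2 hy)
  · intro e₁ h₁ e₂ h₂ heq
    have : (e₁.image π.symm).image π = (e₂.image π.symm).image π := by rw [heq]
    simpa [Finset.image_image] using this
  · intro e he
    simp only [Finset.mem_filter] at he
    refine ⟨e.image π, ?_, by simp [Finset.image_image]⟩
    simp only [Finset.mem_filter]
    constructor
    · rw [mem_support_ren]
      simpa [Finset.image_image] using he.1
    · intro x hx
      have h1 : π.symm x ∈ e := he.2 (Finset.mem_image_of_mem _ hx)
      have : π (π.symm x) ∈ e.image π := Finset.mem_image_of_mem _ h1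
      simpa using this
  · intro e he
    simp [ren_apply]


/-! ### Eqs and Zsum -/

lemma hgequiv_iff {G H : HG d} : HGEquiv G H ↔ ∃ π : ℕ ≃ ℕ, H = ren π G := by
  constructor
  · rintro ⟨π, hπ⟩
    refine ⟨π, ?_⟩
    ext e
    rw [ren_apply, ← hπ (e.image π.symm)]
    simp [Finset.image_image]
  · rintro ⟨π, rfl⟩
    exact ⟨π, fun e => ren_apply_image π G e⟩

lemma ren_mem_Eqs {𝒢 : Set (HG d)} {G : HG d} (hG : G ∈ 𝒢) (π : ℕ ≃ ℕ) :
    ren π G ∈ Eqs 𝒢 :=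
  ⟨G, hG, hgequiv_iff.mpr ⟨π, rfl⟩⟩

lemma mem_Eqs_iff {𝒢 : Set (HG d)} {H : HG d} :
    H ∈ Eqs 𝒢 ↔ ∃ G ∈ 𝒢, ∃ π : ℕ ≃ ℕ, H = ren π G := by
  constructor
  · rintro ⟨G, hG, hGH⟩
    obtain ⟨π, rfl⟩ := hgequiv_iff.mp hGH
    exact ⟨G, hG, π, rfl⟩
  · rintro ⟨G, hG, π, rfl⟩
    exact ren_mem_Eqs hG π

lemma self_mem_Eqs {𝒢 : Set (HG d)} {G : HG d} (hG : G ∈ 𝒢) : G ∈ Eqs 𝒢 := by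
  have := ren_mem_Eqs hG (Equiv.refl ℕ)
  have h : ren (Equiv.refl ℕ) G = G := by
    ext e; simp [ren_apply]
  rwa [h] at this

lemma zsum_iff_mem_span {𝒮 : Set (HG d)} {H : HG d} :
    H ∈ Zsum 𝒮 ↔ H ∈ Submodule.span ℤ 𝒮 := by
  constructor
  · rintro ⟨l, c, F, hF, rfl⟩
    exact Submodule.sum_mem _ fun i _ =>
      Submodule.smul_mem _ _ (Submodule.subset_span (hF i))
  · intro h
    obtain ⟨n, c, g, hg⟩ := (Submodule.mem_span_set' (R := ℤ)).mp h
    exact ⟨n, c, fun i => (g i : HG d), fun i => (g i).2, hg.symm⟩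


/-! ### links -/

/-- The link of a hypergraph at a finite set `Y`: the hyperedges containing `Y`,
with `Y` removed. -/
noncomputable def mlink (Y : Finset ℕ) (H : HG d) : HG d :=
  Finsupp.onFinset (H.support.image (· \ Y))
    (fun f => if Disjoint f Y then H (f ∪ Y) else 0)
    (by
      intro f hf
      have hdisj : Disjoint f Y := by
        by_contra hc
        simp [hc] at hf
      simp only [if_pos hdisj] at hf
      simp only [Finset.mem_image]
      exact ⟨f ∪ Y, Finsupp.mem_support_iff.mpr hf, by
        rw [Finset.union_sdiff_right]
        exact Finset.sdiff_eq_self_of_disjoint hdisj⟩)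

lemma mlink_apply (Y : Finset ℕ) (H : HG d) (f : Finset ℕ) :
    mlink Y H f = if Disjoint f Y then H (f ∪ Y) else 0 := rfl

lemma mlink_apply_of_disjoint {Y f : Finset ℕ} (h : Disjoint f Y) (H : HG d) :
    mlink Y H f = H (f ∪ Y) := by rw [mlink_apply, if_pos h]

lemma mem_support_mlink {Y : Finset ℕ} {H : HG d} {f : Finset ℕ} :
    f ∈ (mlink Y H).support ↔ Disjoint f Y ∧ f ∪ Y ∈ H.support := by
  rw [Finsupp.mem_support_iff, mlink_apply]
  by_cases h : Disjoint f Y <;> simp [h, Finsupp.mem_support_iff]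

lemma verts_mlink_subset (Y : Finset ℕ) (H : HG d) :
    verts (mlink Y H) ⊆ verts H := by
  intro x hx
  rw [verts, Finset.mem_sup] at hx
  obtain ⟨f, hf, hx⟩ := hx
  obtain ⟨hd, hs⟩ := mem_support_mlink.mp hf
  exact mem_verts hs (Finset.mem_union_left _ hx)

lemma verts_mlink_disjoint (Y : Finset ℕ) (H : HG d) :
    Disjoint (verts (mlink Y H)) Y := by
  rw [Finset.disjoint_left]
  intro x hx hxY
  rw [verts, Finset.mem_sup] at hx
  obtain ⟨f, hf, hx⟩ := hx
  obtain ⟨hd, _⟩ := mem_support_mlink.mp hf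
  exact (Finset.disjoint_left.mp hd) hx hxY

lemma weight_mlink {Z Y : Finset ℕ} (h : Disjoint Z Y) (H : HG d) :
    weight Z (mlink Y H) = weight (Z ∪ Y) H := by
  rw [weight, weight]
  apply Finset.sum_bij (i := fun f _ => f ∪ Y)
  · intro f hf
    simp only [Finset.mem_filter] at hf ⊢
    obtain ⟨hm, hZ⟩ := hf
    obtain ⟨hd, hs⟩ := mem_support_mlink.mp hm
    exact ⟨hs, Finset.union_subset_union_left hZ⟩
  · intro f₁ h₁ f₂ h₂ heq
    simp only [Finset.mem_filter] at h₁ h₂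
    obtain ⟨hd₁, _⟩ := mem_support_mlink.mp h₁.1
    obtain ⟨hd₂, _⟩ := mem_support_mlink.mp h₂.1
    have := congrArg (· \ Y) heq
    simpa [Finset.union_sdiff_right, Finset.sdiff_eq_self_of_disjoint, hd₁, hd₂] using this
  · intro e he
    simp only [Finset.mem_filter] at he
    obtain ⟨hs, hZY⟩ := he
    have hY : Y ⊆ e := (Finset.union_subset_iff.mp hZY).2
    refine ⟨e \ Y, ?_, by rw [Finset.sdiff_union_of_subset hY]⟩
    simp only [Finset.mem_filter]
    refine ⟨mem_support_mlink.mpr ⟨Finset.sdiff_disjoint, by rw [Finset.sdiff_union_of_subset hY]; exact hs⟩, ?_⟩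
    intro x hx
    simp only [Finset.mem_sdiff]
    exact ⟨(Finset.union_subset_iff.mp hZY).1 hx, Finset.disjoint_left.mp h hx⟩
  · intro f hf
    simp only [Finset.mem_filter] at hf
    obtain ⟨hd, _⟩ := mem_support_mlink.mp hf.1
    rw [mlink_apply_of_disjoint hd]

lemma weight_mlink_not_disjoint {Z Y : Finset ℕ} (h : ¬ Disjoint Z Y) (H : HG d) :
    weight Z (mlink Y H) = 0 := by
  apply weight_eq_zero_of_no_edge
  intro f hf hZf
  obtain ⟨hd, _⟩ := mem_support_mlink.mp hf
  exact h (Finset.disjoint_of_subset_left hZf hd)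

lemma mlink_isHG {k m : ℕ} {Y : Finset ℕ} {H : HG d} (hH : IsHG k H) (hY : Y.card = m) :
    IsHG (k - m) (mlink Y H) := by
  intro f hf
  obtain ⟨hd, hs⟩ := mem_support_mlink.mp hf
  have := hH _ hs
  rw [Finset.card_union_of_disjoint hd] at this
  omega

lemma ren_mlink (σ : ℕ ≃ ℕ) (Y : Finset ℕ) (H : HG d) :
    ren σ (mlink Y H) = mlink (Y.image σ) (ren σ H) := by
  ext f
  rw [ren_apply, mlink_apply, mlink_apply, ren_apply]
  have himg : (f.image σ.symm) ∪ Y = (f ∪ Y.image σ).image σ.symm := by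
    rw [Finset.image_union, Finset.image_image]
    congr 1
    ext y
    simp only [Finset.mem_image, Function.comp_apply]
    constructor
    · intro hy; exact ⟨y, hy, by simp⟩
    · rintro ⟨z, hz, rfl⟩; simpa using hz
  have hdisj : Disjoint (f.image σ.symm) Y ↔ Disjoint f (Y.image σ) := by
    constructor
    · intro h
      rw [Finset.disjoint_left]
      rintro x hx hximg
      obtain ⟨y, hy, rfl⟩ := Finset.mem_image.mp hximg
      exact Finset.disjoint_left.mp h (by simpa using Finset.mem_image_of_mem σ.symm hx) hy
    · intro h
      rw [Finset.disjoint_left]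
      rintro x hx hxY
      obtain ⟨y, hy, rfl⟩ := Finset.mem_image.mp hx
      exact Finset.disjoint_left.mp h hy (by simpa using Finset.mem_image_of_mem σ hxY)
  by_cases hd : Disjoint f (Y.image σ)
  · rw [if_pos hd, if_pos (hdisj.mpr hd), himg]
  · rw [if_neg hd, if_neg (fun hc => hd (hdisj.mp hc))]

lemma mlink_add (Y : Finset ℕ) (H₁ H₂ : HG d) :
    mlink Y (H₁ + H₂) = mlink Y H₁ + mlink Y H₂ := by
  ext f
  simp only [mlink_apply, Finsupp.add_apply]
  by_cases h : Disjoint f Y <;> simp [h]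

lemma mlink_mlink {y : ℕ} {Y : Finset ℕ} (hy : y ∉ Y) (H : HG d) :
    mlink {y} (mlink Y H) = mlink (insert y Y) H := by
  ext f
  rw [mlink_apply, mlink_apply, mlink_apply]
  by_cases h1 : Disjoint f {y}
  · rw [if_pos h1]
    have hyf : y ∉ f := by
      intro hc; exact (Finset.disjoint_left.mp h1) hc (Finset.mem_singleton_self y)
    by_cases h2 : Disjoint (f ∪ {y}) Y
    · rw [if_pos h2]
      have h3 : Disjoint f (insert y Y) := by
        rw [Finset.disjoint_right]
        intro x hx
        rcases Finset.mem_insert.mp hx with rfl | hx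
        · exact hyf
        · intro hc
          exact (Finset.disjoint_left.mp h2) (Finset.mem_union_left _ hc) hx
      rw [if_pos h3]
      have harg : f ∪ {y} ∪ Y = f ∪ insert y Y := by
        ext x
        simp only [Finset.mem_union, Finset.mem_insert, Finset.mem_singleton]
        tauto
      rw [harg]
    · rw [if_neg h2]
      have h3 : ¬ Disjoint f (insert y Y) := by
        intro hc
        apply h2
        rw [Finset.disjoint_left]
        intro x hx hxY
        rcases Finset.mem_union.mp hx with hx | hx
        · exact (Finset.disjoint_left.mp hc) hx (Finset.mem_insert_of_mem hxY)
        · rw [Finset.mem_singleton] at hx; subst hx; exact hy hxY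
      rw [if_neg h3]
  · rw [if_neg h1]
    have h3 : ¬ Disjoint f (insert y Y) := by
      intro hc
      apply h1
      rw [Finset.disjoint_right]
      intro x hx
      rw [Finset.mem_singleton] at hx; subst hx
      exact (Finset.disjoint_right.mp hc) (Finset.mem_insert_self _ _)
    rw [if_neg h3]


/-! ### cones -/

/-- Insert a vertex into every hyperedge. -/
noncomputable def cone (a : ℕ) (M : HG d) : HG d :=
  Finsupp.mapDomain (insert a) M

lemma cone_support_subset (a : ℕ) (M : HG d) :
    (cone a M).support ⊆ M.support.image (insert a) :=
  Finsupp.mapDomain_support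

lemma cone_apply {a : ℕ} {M : HG d} (ha : a ∉ verts M) (e : Finset ℕ) :
    cone a M e = if a ∈ e then M (e.erase a) else 0 := by
  have hnotmem : ∀ f ∈ M.support, a ∉ f := fun f hf hc => ha (mem_verts hf hc)
  by_cases hae : a ∈ e
  · rw [if_pos hae]
    by_cases he : e.erase a ∈ M.support
    · have hS : (M.support : Set (Finset ℕ)) ⊆ insert (e.erase a) (M.support : Set (Finset ℕ)) :=
        Set.subset_insert _ _
      have hinj : Set.InjOn (insert a) (insert (e.erase a) (M.support : Set (Finset ℕ))) := by
        intro f₁ h₁ f₂ h₂ heq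
        have ha₁ : a ∉ f₁ := by
          rcases h₁ with rfl | h₁
          · exact Finset.notMem_erase a e
          · exact hnotmem _ h₁
        have ha₂ : a ∉ f₂ := by
          rcases h₂ with rfl | h₂
          · exact Finset.notMem_erase a e
          · exact hnotmem _ h₂
        have : (insert a f₁).erase a = (insert a f₂).erase a := by rw [heq]
        rwa [Finset.erase_insert ha₁, Finset.erase_insert ha₂] at this
      have := Finsupp.mapDomain_apply' (insert (e.erase a) (M.support : Set (Finset ℕ)))
        M hS hinj (a := e.erase a) (Set.mem_insert _ _)
      rw [Finset.insert_erase hae] at this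
      exact this
    · rw [Finsupp.notMem_support_iff.mp he]
      apply Finsupp.notMem_support_iff.mp
      intro hc
      obtain ⟨f, hf, hfe⟩ := Finset.mem_image.mp (cone_support_subset a M hc)
      apply he
      have : f = e.erase a := by
        rw [← hfe, Finset.erase_insert (hnotmem f hf)]
      rwa [← this]
  · rw [if_neg hae]
    apply Finsupp.notMem_support_iff.mp
    intro hc
    obtain ⟨f, hf, hfe⟩ := Finset.mem_image.mp (cone_support_subset a M hc)
    exact hae (hfe ▸ Finset.mem_insert_self a f)

lemma verts_cone_subset (a : ℕ) (M : HG d) :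
    verts (cone a M) ⊆ insert a (verts M) := by
  intro x hx
  rw [verts, Finset.mem_sup] at hx
  obtain ⟨e, he, hx⟩ := hx
  obtain ⟨f, hf, rfl⟩ := Finset.mem_image.mp (cone_support_subset a M he)
  rcases Finset.mem_insert.mp hx with rfl | hx
  · exact Finset.mem_insert_self _ _
  · exact Finset.mem_insert_of_mem (mem_verts hf hx)

lemma cone_add (a : ℕ) (M₁ M₂ : HG d) : cone a (M₁ + M₂) = cone a M₁ + cone a M₂ :=
  Finsupp.mapDomain_add

lemma cone_smul (a : ℕ) (c : ℤ) (M : HG d) : cone a (c • M) = c • cone a M :=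
  Finsupp.mapDomain_smul c M

lemma cone_sum {ι : Type*} (a : ℕ) (s : Finset ι) (v : ι → HG d) :
    cone a (∑ i ∈ s, v i) = ∑ i ∈ s, cone a (v i) :=
  Finsupp.mapDomain_finset_sum

lemma cone_ren (π : ℕ ≃ ℕ) (a : ℕ) (M : HG d) :
    ren π (cone a M) = cone (π a) (ren π M) := by
  rw [ren, ren, Finsupp.equivMapDomain_eq_mapDomain, Finsupp.equivMapDomain_eq_mapDomain,
    cone, cone, ← Finsupp.mapDomain_comp, ← Finsupp.mapDomain_comp]
  apply Finsupp.mapDomain_congr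
  intro f _
  simp only [Function.comp_apply, Equiv.finsetCongr_apply]
  rw [Finset.map_eq_image, Finset.map_eq_image, Finset.image_insert]
  rfl

lemma cone_isHG {t : ℕ} {a : ℕ} {M : HG d} (hM : IsHG t M) (ha : a ∉ verts M) :
    IsHG (t + 1) (cone a M) := by
  intro e he
  obtain ⟨f, hf, rfl⟩ := Finset.mem_image.mp (cone_support_subset a M he)
  rw [Finset.card_insert_of_notMem (fun hc => ha (mem_verts hf hc))]
  rw [hM f hf]


/-! ### the local spans and the main span -/

/-- span of all weights of `m`-subsets of members of `𝒢` -/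
noncomputable def LL (𝒢 : Set (HG d)) (m : ℕ) : Submodule ℤ (Fin d → ℤ) :=
  Submodule.span ℤ {w | ∃ G ∈ 𝒢, ∃ X' : Finset ℕ, X' ⊆ verts G ∧ X'.card = m ∧ w = weight X' G}

/-- the span of all renamed copies of members of `𝒢` -/
noncomputable def SE (𝒢 : Set (HG d)) : Submodule ℤ (HG d) :=
  Submodule.span ℤ (Eqs 𝒢)

def IsLocal (𝒢 : Set (HG d)) (H : HG d) : Prop :=
  ∀ X : Finset ℕ, weight X H ∈ LL 𝒢 X.card

lemma isLocal_zero (𝒢 : Set (HG d)) : IsLocal 𝒢 (0 : HG d) := by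
  intro X
  rw [weight_zero]
  exact Submodule.zero_mem _

lemma isLocal_sub {𝒢 : Set (HG d)} {H₁ H₂ : HG d} (h₁ : IsLocal 𝒢 H₁) (h₂ : IsLocal 𝒢 H₂) :
    IsLocal 𝒢 (H₁ - H₂) := by
  intro X
  rw [weight_sub]
  exact Submodule.sub_mem _ (h₁ X) (h₂ X)

lemma weight_mem_LL {𝒢 : Set (HG d)} {G : HG d} (hG : G ∈ 𝒢) (X : Finset ℕ) :
    weight X G ∈ LL 𝒢 X.card := by
  by_cases h : weight X G = 0
  · rw [h]; exact Submodule.zero_mem _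
  · obtain ⟨e, he, hXe⟩ := exists_edge_of_weight_ne_zero h
    exact Submodule.subset_span ⟨G, hG, X, fun x hx => mem_verts he (hXe hx), rfl, rfl⟩

lemma mem_SE_of_mem {𝒢 : Set (HG d)} {G : HG d} (hG : G ∈ 𝒢) : G ∈ SE 𝒢 :=
  Submodule.subset_span (self_mem_Eqs hG)

lemma ren_zero (π : ℕ ≃ ℕ) : ren π (0 : HG d) = 0 := by
  ext e; simp

lemma ren_mem_SE {𝒢 : Set (HG d)} {H : HG d} (π : ℕ ≃ ℕ) (h : H ∈ SE 𝒢) :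
    ren π H ∈ SE 𝒢 := by
  induction h using Submodule.span_induction with
  | mem x hx =>
    obtain ⟨G, hG, τ, rfl⟩ := mem_Eqs_iff.mp hx
    rw [ren_ren]
    exact Submodule.subset_span (ren_mem_Eqs hG _)
  | zero => rw [ren_zero]; exact Submodule.zero_mem _
  | add x y _ _ hx hy => rw [ren_add]; exact Submodule.add_mem _ hx hy
  | smul c x _ hx => rw [ren_smul]; exact Submodule.smul_mem _ _ hx

lemma SE_le_of_subset {𝒢₁ 𝒢₂ : Set (HG d)} (h : ∀ K ∈ 𝒢₁, K ∈ SE 𝒢₂) :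
    SE 𝒢₁ ≤ SE 𝒢₂ := by
  rw [SE, Submodule.span_le]
  rintro x hx
  obtain ⟨G, hG, π, rfl⟩ := mem_Eqs_iff.mp hx
  exact ren_mem_SE π (h G hG)

/-- members of the span are local -/
lemma isLocal_of_mem_SE {𝒢 : Set (HG d)} {H : HG d} (h : H ∈ SE 𝒢) : IsLocal 𝒢 H := by
  induction h using Submodule.span_induction with
  | mem x hx =>
    obtain ⟨G, hG, π, rfl⟩ := mem_Eqs_iff.mp hx
    intro X
    rw [weight_ren]
    have hcard : (X.image π.symm).card = X.card := Finset.card_image_of_injective _ π.symm.injective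
    rw [← hcard]
    exact weight_mem_LL hG _
  | zero => exact isLocal_zero 𝒢
  | add x y _ _ hx hy =>
    intro X
    rw [weight_add]
    exact Submodule.add_mem _ (hx X) (hy X)
  | smul c x _ hx =>
    intro X
    rw [weight_smul]
    exact Submodule.smul_mem _ _ (hx X)

/-! ### the link family -/

def LinkFam (𝒢 : Set (HG d)) : Set (HG d) :=
  {K | ∃ G ∈ 𝒢, ∃ y : ℕ, K = mlink {y} G}

lemma linkFam_isHG {k : ℕ} {𝒢 : Set (HG d)} (h𝒢 : ∀ G ∈ 𝒢, IsHG k G) :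
    ∀ K ∈ LinkFam 𝒢, IsHG (k - 1) K := by
  rintro K ⟨G, hG, y, rfl⟩
  exact mlink_isHG (h𝒢 G hG) (Finset.card_singleton y)

lemma linkFam_iter_isHG {k : ℕ} (r : ℕ) {𝒢 : Set (HG d)} (h𝒢 : ∀ G ∈ 𝒢, IsHG k G) :
    ∀ K ∈ (LinkFam (d := d))^[r] 𝒢, IsHG (k - r) K := by
  induction r generalizing 𝒢 k with
  | zero => simpa using h𝒢
  | succ r ih =>
    rw [Function.iterate_succ_apply]
    intro K hK
    have := ih (linkFam_isHG h𝒢) K hK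
    rwa [Nat.sub_sub, Nat.add_comm 1 r] at this

lemma LL_shift {𝒢 : Set (HG d)} (j : ℕ) : LL 𝒢 (j + 1) ≤ LL (LinkFam 𝒢) j := by
  rw [LL, Submodule.span_le]
  rintro w ⟨G, hG, X, hXv, hXc, rfl⟩
  by_cases h : weight X G = 0
  · rw [h]; exact Submodule.zero_mem _
  obtain ⟨e, he, hXe⟩ := exists_edge_of_weight_ne_zero h
  have hne : X.Nonempty := Finset.card_pos.mp (by omega)
  obtain ⟨y, hy⟩ := hne
  have hdisj : Disjoint (X.erase y) ({y} : Finset ℕ) := by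
    simp [Finset.disjoint_singleton_right]
  have hunion : X.erase y ∪ {y} = X := by
    ext x
    simp only [Finset.mem_union, Finset.mem_erase, Finset.mem_singleton]
    constructor
    · rintro (⟨_, hx⟩ | rfl) <;> [exact hx; exact hy]
    · intro hx
      by_cases hxy : x = y
      · right; exact hxy
      · left; exact ⟨hxy, hx⟩
  have hw : weight X G = weight (X.erase y) (mlink {y} G) := by
    rw [weight_mlink hdisj, hunion]
  rw [hw]
  have hcard : (X.erase y).card = j := by
    rw [Finset.card_erase_of_mem hy, hXc]
    omega
  rw [← hcard]
  apply weight_mem_LL (𝒢 := LinkFam 𝒢) ⟨G, hG, y, rfl⟩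

lemma LL_shift_iter {𝒢 : Set (HG d)} (r j : ℕ) :
    LL 𝒢 (j + r) ≤ LL ((LinkFam (d := d))^[r] 𝒢) j := by
  induction r generalizing 𝒢 j with
  | zero => simp
  | succ r ih =>
    rw [Function.iterate_succ_apply]
    calc LL 𝒢 (j + (r + 1)) = LL 𝒢 ((j + r) + 1) := by ring_nf
    _ ≤ LL (LinkFam 𝒢) (j + r) := LL_shift _
    _ ≤ LL ((LinkFam (d := d))^[r] (LinkFam 𝒢)) j := ih (𝒢 := LinkFam 𝒢) j


/-! ### swap and image helpers -/

lemma mem_image_equiv_iff (π : ℕ ≃ ℕ) (s : Finset ℕ) (x : ℕ) :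
    x ∈ s.image π ↔ π.symm x ∈ s := by
  constructor
  · rintro hx
    obtain ⟨y, hy, rfl⟩ := Finset.mem_image.mp hx
    simpa using hy
  · intro hx
    have := Finset.mem_image_of_mem π hx
    simpa using this

lemma mem_verts_ren_iff (π : ℕ ≃ ℕ) (H : HG d) (x : ℕ) :
    x ∈ verts (ren π H) ↔ π.symm x ∈ verts H := by
  rw [verts_ren, mem_image_equiv_iff]

lemma image_swap_of_mem {e : Finset ℕ} {y u : ℕ} (hy : y ∉ e) (hu : u ∈ e) :
    e.image (Equiv.swap y u) = insert y (e.erase u) := by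
  ext x
  simp only [Finset.mem_image, Finset.mem_insert, Finset.mem_erase]
  constructor
  · rintro ⟨z, hz, rfl⟩
    by_cases hzy : z = y
    · exact absurd (hzy ▸ hz) hy
    by_cases hzu : z = u
    · subst hzu; left; rw [Equiv.swap_apply_right]
    · right
      rw [Equiv.swap_apply_of_ne_of_ne hzy hzu]
      exact ⟨hzu, hz⟩
  · rintro (h | ⟨hxu, hx⟩)
    · exact ⟨u, hu, by rw [Equiv.swap_apply_right]; exact h.symm⟩
    · refine ⟨x, hx, ?_⟩
      have hxy : x ≠ y := fun hc => hy (hc ▸ hx)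
      rw [Equiv.swap_apply_of_ne_of_ne hxy hxu]

lemma image_swap_of_not_mem {e : Finset ℕ} {y u : ℕ} (hy : y ∉ e) (hu : u ∉ e) :
    e.image (Equiv.swap y u) = e := by
  rw [Finset.image_congr (g := id), Finset.image_id]
  intro x hx
  have hxy : x ≠ y := fun hc => hy (hc ▸ hx)
  have hxu : x ≠ u := fun hc => hu (hc ▸ hx)
  simp only [id]
  rw [Equiv.swap_apply_of_ne_of_ne hxy hxu]

/-! ### the core identity -/

lemma core_identity {G : HG d} {y u v : ℕ} (hu : u ∉ verts G) (hv : v ∉ verts G)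
    (huy : u ≠ y) (hvy : v ≠ y) :
    ren (Equiv.swap y u) G - ren (Equiv.swap y v) G
      = cone u (mlink {y} G) - cone v (mlink {y} G) := by
  have huml : u ∉ verts (mlink {y} G) := fun hc => hu (verts_mlink_subset _ _ hc)
  have hvml : v ∉ verts (mlink {y} G) := fun hc => hv (verts_mlink_subset _ _ hc)
  ext e
  rw [Finsupp.sub_apply, Finsupp.sub_apply, ren_apply, ren_apply,
    cone_apply huml, cone_apply hvml, Equiv.symm_swap, Equiv.symm_swap]
  -- structure of the individual terms
  have mlink_term : ∀ w : ℕ, w ≠ y → y ∉ e → w ∈ e →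
      mlink {y} G (e.erase w) = G (insert y (e.erase w)) := by
    intro w hwy hye hwe
    have hdisj : Disjoint (e.erase w) ({y} : Finset ℕ) := by
      rw [Finset.disjoint_singleton_right]
      intro hc
      exact hye (Finset.mem_of_mem_erase hc)
    rw [mlink_apply_of_disjoint hdisj]
    congr 1
    ext x
    simp only [Finset.mem_union, Finset.mem_insert, Finset.mem_singleton]
    tauto
  have mlink_zero : ∀ w : ℕ, w ≠ y → y ∈ e → w ∈ e →
      mlink {y} G (e.erase w) = 0 := by
    intro w hwy hye hwe
    have : ¬ Disjoint (e.erase w) ({y} : Finset ℕ) := by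
      rw [Finset.disjoint_singleton_right]
      intro hc
      exact hc (Finset.mem_erase.mpr ⟨Ne.symm hwy, hye⟩)
    rw [mlink_apply, if_neg this]
  by_cases hye : y ∈ e
  · -- all four terms vanish
    have lzero : ∀ w : ℕ, w ∉ verts G → G (e.image (Equiv.swap y w)) = 0 := by
      intro w hw
      have hmem : w ∈ e.image (Equiv.swap y w) := by
        have := Finset.mem_image_of_mem (Equiv.swap y w) hye
        rwa [Equiv.swap_apply_left] at this
      exact eval_eq_zero_of_mem_not_verts hmem hw
    rw [lzero u hu, lzero v hv]
    by_cases hue : u ∈ e <;> by_cases hve : v ∈ e <;>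
      simp [hue, hve, mlink_zero u huy hye, mlink_zero v hvy hye]
  · by_cases hue : u ∈ e <;> by_cases hve : v ∈ e
    · rw [image_swap_of_mem hye hue, image_swap_of_mem hye hve, if_pos hue, if_pos hve,
        mlink_term u huy hye hue, mlink_term v hvy hye hve]
    · rw [image_swap_of_mem hye hue, image_swap_of_not_mem hye hve, if_pos hue, if_neg hve,
        mlink_term u huy hye hue, eval_eq_zero_of_mem_not_verts hue hu]
    · rw [image_swap_of_not_mem hye hue, image_swap_of_mem hye hve, if_neg hue, if_pos hve,
        mlink_term v hvy hye hve, eval_eq_zero_of_mem_not_verts hve hv]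
    · rw [image_swap_of_not_mem hye hue, image_swap_of_not_mem hye hve, if_neg hue, if_neg hve]
      simp


noncomputable def renHom (π : ℕ ≃ ℕ) : HG d →+ HG d :=
  { toFun := ren π, map_zero' := ren_zero π, map_add' := ren_add π }

lemma ren_sum {ι : Type*} (π : ℕ ≃ ℕ) (s : Finset ι) (f : ι → HG d) :
    ren π (∑ i ∈ s, f i) = ∑ i ∈ s, ren π (f i) :=
  map_sum (renHom π) f s

lemma ren_mem_Eqs_of_mem_Eqs {𝒮 : Set (HG d)} {H : HG d} (h : H ∈ Eqs 𝒮) (σ : ℕ ≃ ℕ) :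
    ren σ H ∈ Eqs 𝒮 := by
  obtain ⟨G, hG, π, rfl⟩ := mem_Eqs_iff.mp h
  rw [ren_ren]
  exact ren_mem_Eqs hG _

/-! ### the dipole lemma -/

lemma dipole_gen {𝒢 : Set (HG d)} {K' : HG d} {u v : ℕ} (huv : u ≠ v)
    (hu : u ∉ verts K') (hv : v ∉ verts K') (hK : K' ∈ Eqs (LinkFam 𝒢)) :
    cone u K' - cone v K' ∈ SE 𝒢 := by
  obtain ⟨K₀, hK₀, π, rfl⟩ := mem_Eqs_iff.mp hK
  obtain ⟨G, hG, y, rfl⟩ := hK₀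
  set M := mlink {y} G with hM
  have hab : π.symm u ≠ π.symm v := fun h => huv (π.symm.injective h)
  have haM : π.symm u ∉ verts M := by rw [mem_verts_ren_iff] at hu; exact hu
  have hbM : π.symm v ∉ verts M := by rw [mem_verts_ren_iff] at hv; exact hv
  -- fresh vertices
  set B : Finset ℕ := verts G ∪ {y, π.symm u, π.symm v} with hB
  set N := B.sup id with hN
  have hle : ∀ x ∈ B, x ≤ N := fun x hx => Finset.le_sup (f := id) hx
  have hyB : y ∈ B := by simp [hB]
  have haB : π.symm u ∈ B := by simp [hB]
  have hbB : π.symm v ∈ B := by simp [hB]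
  have hGB : verts G ⊆ B := by intro x hx; simp [hB, hx]
  have hfresh : ∀ x ∈ B, x ≠ N + 1 ∧ x ≠ N + 2 := fun x hx => by
    have := hle x hx; constructor <;> omega
  set σ := (Equiv.swap (π.symm u) (N + 1)).trans (Equiv.swap (π.symm v) (N + 2)) with hσ
  have hσapp : ∀ x : ℕ, σ x = Equiv.swap (π.symm v) (N + 2) (Equiv.swap (π.symm u) (N + 1) x) :=
    fun x => rfl
  have hσsymm : ∀ x : ℕ, σ.symm x = Equiv.swap (π.symm u) (N + 1) (Equiv.swap (π.symm v) (N + 2) x) :=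
    fun x => rfl
  have hσa : σ.symm (π.symm u) = N + 1 := by
    rw [hσsymm, Equiv.swap_apply_of_ne_of_ne hab (hfresh _ haB).2, Equiv.swap_apply_left]
  have hσb : σ.symm (π.symm v) = N + 2 := by
    rw [hσsymm, Equiv.swap_apply_left,
      Equiv.swap_apply_of_ne_of_ne (fun h => (hfresh _ haB).2 h.symm) (by omega)]
  have hfixM : ∀ x ∈ verts M, σ x = x := by
    intro x hx
    have hxB : x ∈ B := hGB (verts_mlink_subset _ _ hx)
    rw [hσapp, Equiv.swap_apply_of_ne_of_ne (fun h => haM (by rw [← h]; exact hx)) (hfresh x hxB).1,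
      Equiv.swap_apply_of_ne_of_ne (fun h => hbM (by rw [← h]; exact hx)) (hfresh x hxB).2]
  have hMfix : ren σ M = M := ren_eq_self_of_fix hfixM
  have hrenM : ren σ M = mlink {σ y} (ren σ G) := by
    rw [hM, ren_mlink, Finset.image_singleton]
  have haG : π.symm u ∉ verts (ren σ G) := by
    rw [mem_verts_ren_iff, hσa]
    intro hc
    exact (hfresh _ (hGB hc)).1 rfl
  have hbG : π.symm v ∉ verts (ren σ G) := by
    rw [mem_verts_ren_iff, hσb]
    intro hc
    exact (hfresh _ (hGB hc)).2 rfl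
  have hay : π.symm u ≠ σ y := by
    intro h
    have h2 : σ.symm (π.symm u) = y := by rw [h]; simp
    rw [hσa] at h2
    exact (hfresh y hyB).1 h2.symm
  have hby : π.symm v ≠ σ y := by
    intro h
    have h2 : σ.symm (π.symm v) = y := by rw [h]; simp
    rw [hσb] at h2
    exact (hfresh y hyB).2 h2.symm
  have hcore := core_identity (G := ren σ G) (y := σ y) haG hbG hay hby
  have hconeM : cone (π.symm u) M - cone (π.symm v) M
      = ren (Equiv.swap (σ y) (π.symm u)) (ren σ G)
        - ren (Equiv.swap (σ y) (π.symm v)) (ren σ G) := by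
    rw [hcore, ← hrenM, hMfix]
  have htarget : cone u (ren π M) - cone v (ren π M)
      = ren π (cone (π.symm u) M - cone (π.symm v) M) := by
    rw [ren_sub, cone_ren, cone_ren, π.apply_symm_apply, π.apply_symm_apply]
  rw [htarget, hconeM]
  apply ren_mem_SE
  rw [ren_ren, ren_ren]
  exact Submodule.sub_mem _ (Submodule.subset_span (ren_mem_Eqs hG _))
    (Submodule.subset_span (ren_mem_Eqs hG _))

lemma dipole {𝒢 : Set (HG d)} {K : HG d} {u v : ℕ} (huv : u ≠ v)
    (hu : u ∉ verts K) (hv : v ∉ verts K) (hK : K ∈ SE (LinkFam 𝒢)) :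
    cone u K - cone v K ∈ SE 𝒢 := by
  obtain ⟨n, c, g, hsum⟩ := (Submodule.mem_span_set' (R := ℤ)).mp hK
  set B : Finset ℕ := (verts K ∪ {u, v}) ∪ Finset.univ.sup (fun i => verts (g i : HG d)) with hB
  set N := B.sup id with hN
  have hle : ∀ x ∈ B, x ≤ N := fun x hx => Finset.le_sup (f := id) hx
  have hgB : ∀ i, verts (g i : HG d) ⊆ B := by
    intro i x hx
    exact Finset.mem_union_right _ (Finset.mem_sup.mpr ⟨i, Finset.mem_univ i, hx⟩)
  have hKB : verts K ⊆ B := fun x hx => Finset.mem_union_left _ (Finset.mem_union_left _ hx)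
  have huB : u ∈ B := Finset.mem_union_left _ (Finset.mem_union_right _ (by simp))
  have hvB : v ∈ B := Finset.mem_union_left _ (Finset.mem_union_right _ (by simp))
  have hfresh : ∀ x ∈ B, x ≠ N + 1 ∧ x ≠ N + 2 := fun x hx => by
    have := hle x hx; constructor <;> omega
  set σ := (Equiv.swap u (N + 1)).trans (Equiv.swap v (N + 2)) with hσ
  have hσapp : ∀ x : ℕ, σ x = Equiv.swap v (N + 2) (Equiv.swap u (N + 1) x) := fun x => rfl
  have hσsymm : ∀ x : ℕ, σ.symm x = Equiv.swap u (N + 1) (Equiv.swap v (N + 2) x) := fun x => rfl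
  have hfixK : ∀ x ∈ verts K, σ x = x := by
    intro x hx
    have hxB : x ∈ B := hKB hx
    rw [hσapp, Equiv.swap_apply_of_ne_of_ne (fun h => hu (by rw [← h]; exact hx)) (hfresh x hxB).1,
      Equiv.swap_apply_of_ne_of_ne (fun h => hv (by rw [← h]; exact hx)) (hfresh x hxB).2]
  have hKfix : ren σ K = K := ren_eq_self_of_fix hfixK
  have hKsum : K = ∑ i, c i • ren σ (g i : HG d) := by
    conv_lhs => rw [← hKfix, ← hsum]
    rw [ren_sum]
    exact Finset.sum_congr rfl (fun i _ => by rw [ren_smul])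
  have hreps : ∀ i : Fin n, cone u (ren σ (g i : HG d)) - cone v (ren σ (g i : HG d)) ∈ SE 𝒢 := by
    intro i
    apply dipole_gen huv
    · rw [mem_verts_ren_iff]
      intro hc
      have huu : σ.symm u = N + 1 := by
        rw [hσsymm, Equiv.swap_apply_of_ne_of_ne huv (hfresh u huB).2, Equiv.swap_apply_left]
      rw [huu] at hc
      exact (hfresh _ (hgB i hc)).1 rfl
    · rw [mem_verts_ren_iff]
      intro hc
      have hvv : σ.symm v = N + 2 := by
        rw [hσsymm, Equiv.swap_apply_left,
          Equiv.swap_apply_of_ne_of_ne (fun h => (hfresh u huB).2 h.symm) (by omega)]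
      rw [hvv] at hc
      exact (hfresh _ (hgB i hc)).2 rfl
    · exact ren_mem_Eqs_of_mem_Eqs (g i).2 σ
  rw [hKsum, cone_sum, cone_sum, ← Finset.sum_sub_distrib]
  apply Submodule.sum_mem
  intro i _
  have hsimp : cone u (c i • ren σ (g i : HG d)) - cone v (c i • ren σ (g i : HG d))
      = c i • (cone u (ren σ (g i : HG d)) - cone v (ren σ (g i : HG d))) := by
    rw [cone_smul, cone_smul, smul_sub]
  rw [hsimp]
  exact Submodule.smul_mem _ _ (hreps i)


/-! ### iterated dipole gadgets -/

noncomputable def Gad : List (ℕ × ℕ) → HG d → HG d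
  | [], K => K
  | p :: L, K => cone p.1 (Gad L K) - cone p.2 (Gad L K)

@[simp] lemma Gad_nil (K : HG d) : Gad [] K = K := rfl
lemma Gad_cons (p : ℕ × ℕ) (L : List (ℕ × ℕ)) (K : HG d) :
    Gad (p :: L) K = cone p.1 (Gad L K) - cone p.2 (Gad L K) := rfl

lemma verts_sub_subset (M₁ M₂ : HG d) : verts (M₁ - M₂) ⊆ verts M₁ ∪ verts M₂ := by
  intro x hx
  rw [verts, Finset.mem_sup] at hx
  obtain ⟨e, he, hx⟩ := hx
  have := Finsupp.support_sub he
  rcases Finset.mem_union.mp this with h | h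
  · exact Finset.mem_union_left _ (mem_verts h hx)
  · exact Finset.mem_union_right _ (mem_verts h hx)

lemma isHG_sub {t : ℕ} {M₁ M₂ : HG d} (h₁ : IsHG t M₁) (h₂ : IsHG t M₂) :
    IsHG t (M₁ - M₂) := by
  intro e he
  rcases Finset.mem_union.mp (Finsupp.support_sub he) with h | h
  · exact h₁ e h
  · exact h₂ e h

lemma verts_gad_subset (ps : List (ℕ × ℕ)) (K : HG d) :
    verts (Gad ps K) ⊆ verts K ∪ (ps.map Prod.fst).toFinset ∪ (ps.map Prod.snd).toFinset := by
  induction ps with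
  | nil => intro x hx; exact Finset.mem_union_left _ (Finset.mem_union_left _ hx)
  | cons p L ih =>
    rw [Gad_cons]
    intro x hx
    have hmono : verts K ∪ (L.map Prod.fst).toFinset ∪ (L.map Prod.snd).toFinset ⊆
        verts K ∪ ((p :: L).map Prod.fst).toFinset ∪ ((p :: L).map Prod.snd).toFinset := by
      intro z hz
      simp only [Finset.mem_union, List.mem_toFinset, List.map_cons, List.mem_cons] at hz ⊢
      tauto
    have hp1 : p.1 ∈ verts K ∪ ((p :: L).map Prod.fst).toFinset ∪ ((p :: L).map Prod.snd).toFinset := by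
      simp
    have hp2 : p.2 ∈ verts K ∪ ((p :: L).map Prod.fst).toFinset ∪ ((p :: L).map Prod.snd).toFinset := by
      simp
    rcases Finset.mem_union.mp (verts_sub_subset _ _ hx) with h | h <;>
    · have h' := verts_cone_subset _ _ h
      rcases Finset.mem_insert.mp h' with rfl | h2
      · first | exact hp1 | exact hp2
      · exact hmono (ih h2)

lemma comps_cons_nodup {p : ℕ × ℕ} {L : List (ℕ × ℕ)}
    (h : (((p :: L).map Prod.fst) ++ ((p :: L).map Prod.snd)).Nodup) :
    p.1 ≠ p.2 ∧ (p.1 ∉ L.map Prod.fst ∧ p.1 ∉ L.map Prod.snd) ∧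
      (p.2 ∉ L.map Prod.fst ∧ p.2 ∉ L.map Prod.snd) ∧
      ((L.map Prod.fst) ++ (L.map Prod.snd)).Nodup := by
  rw [List.map_cons, List.map_cons, List.cons_append, List.nodup_cons] at h
  obtain ⟨hp1, h⟩ := h
  rw [List.nodup_middle, List.nodup_cons] at h
  obtain ⟨hp2, h⟩ := h
  simp only [List.mem_append, List.mem_cons] at hp1
  push_neg at hp1
  simp only [List.mem_append] at hp2
  push_neg at hp2
  exact ⟨hp1.2.1, ⟨hp1.1, hp1.2.2⟩, ⟨hp2.1, hp2.2⟩, h⟩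

lemma not_mem_verts_gad {x : ℕ} {ps : List (ℕ × ℕ)} {K : HG d}
    (hK : x ∉ verts K) (h1 : x ∉ ps.map Prod.fst) (h2 : x ∉ ps.map Prod.snd) :
    x ∉ verts (Gad ps K) := by
  intro hc
  rcases Finset.mem_union.mp (verts_gad_subset ps K hc) with h | h
  · rcases Finset.mem_union.mp h with h | h
    · exact hK h
    · exact h1 (List.mem_toFinset.mp h)
  · exact h2 (List.mem_toFinset.mp h)

lemma gad_mem_SE : ∀ (ps : List (ℕ × ℕ)) (𝒢 : Set (HG d)) (K : HG d),
    K ∈ SE ((LinkFam (d := d))^[ps.length] 𝒢) →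
    (((ps.map Prod.fst) ++ (ps.map Prod.snd)).Nodup) →
    (∀ p ∈ ps, p.1 ∉ verts K ∧ p.2 ∉ verts K) →
    Gad ps K ∈ SE 𝒢 := by
  intro ps
  induction ps with
  | nil =>
    intro 𝒢 K hK _ _
    simpa using hK
  | cons p L ih =>
    intro 𝒢 K hK hnd hv
    obtain ⟨h12, ⟨h1f, h1s⟩, ⟨h2f, h2s⟩, hndL⟩ := comps_cons_nodup hnd
    rw [Gad_cons]
    apply dipole h12
    · exact not_mem_verts_gad (hv p (List.mem_cons_self)).1 h1f h1s
    · exact not_mem_verts_gad (hv p (List.mem_cons_self)).2 h2f h2s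
    · apply ih (LinkFam 𝒢) K
      · rw [← Function.iterate_succ_apply]
        simpa using hK
      · exact hndL
      · exact fun q hq => hv q (List.mem_cons_of_mem _ hq)

lemma gad_isHG {t : ℕ} : ∀ (ps : List (ℕ × ℕ)) (K : HG d),
    IsHG t K →
    (((ps.map Prod.fst) ++ (ps.map Prod.snd)).Nodup) →
    (∀ p ∈ ps, p.1 ∉ verts K ∧ p.2 ∉ verts K) →
    IsHG (t + ps.length) (Gad ps K) := by
  intro ps
  induction ps with
  | nil => intro K hK _ _; simpa using hK
  | cons p L ih =>
    intro K hK hnd hv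
    obtain ⟨h12, ⟨h1f, h1s⟩, ⟨h2f, h2s⟩, hndL⟩ := comps_cons_nodup hnd
    rw [Gad_cons]
    have hGad : IsHG (t + L.length) (Gad L K) :=
      ih K hK hndL (fun q hq => hv q (List.mem_cons_of_mem _ hq))
    have e1 : IsHG (t + L.length + 1) (cone p.1 (Gad L K)) :=
      cone_isHG hGad (not_mem_verts_gad (hv p (List.mem_cons_self)).1 h1f h1s)
    have e2 : IsHG (t + L.length + 1) (cone p.2 (Gad L K)) :=
      cone_isHG hGad (not_mem_verts_gad (hv p (List.mem_cons_self)).2 h2f h2s)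
    have := isHG_sub e1 e2
    simpa [List.length_cons, Nat.add_assoc] using this


/-- pointwise evaluation of a gadget at an edge with many `O`-vertices -/
lemma gad_apply (O : Finset ℕ) : ∀ (ps : List (ℕ × ℕ)) (K : HG d) (e : Finset ℕ),
    (∀ f ∈ K.support, Disjoint f O) →
    (∀ p ∈ ps, p.1 ∈ O) → (∀ p ∈ ps, p.2 ∉ O) →
    (∀ p ∈ ps, p.1 ∉ verts K ∧ p.2 ∉ verts K) →
    (((ps.map Prod.fst) ++ (ps.map Prod.snd)).Nodup) →
    ps.length ≤ (e ∩ O).card →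
    Gad ps K e = if (ps.map Prod.fst).toFinset ⊆ e ∧ (e ∩ O).card = ps.length
      then K (e \ (ps.map Prod.fst).toFinset) else 0 := by
  intro ps
  induction ps with
  | nil =>
    intro K e hKO _ _ _ _ _
    simp only [Gad_nil, List.map_nil, List.toFinset_nil, List.length_nil, Finset.empty_subset,
      true_and, Finset.sdiff_empty]
    by_cases hc : (e ∩ O).card = 0
    · rw [if_pos hc]
    · rw [if_neg hc]
      have hne : (e ∩ O).Nonempty := Finset.card_pos.mp (Nat.pos_of_ne_zero hc)
      obtain ⟨x, hx⟩ := hne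
      by_contra hKe
      have he : e ∈ K.support := Finsupp.mem_support_iff.mpr hKe
      have := hKO e he
      exact Finset.disjoint_left.mp this (Finset.mem_inter.mp hx).1 (Finset.mem_inter.mp hx).2
  | cons p L ih =>
    intro K e hKO hys hcs hvK hnd hlen
    obtain ⟨h12, ⟨h1f, h1s⟩, ⟨h2f, h2s⟩, hndL⟩ := comps_cons_nodup hnd
    have hyO : p.1 ∈ O := hys p (List.mem_cons_self)
    have hcO : p.2 ∉ O := hcs p (List.mem_cons_self)
    have hM1 : p.1 ∉ verts (Gad L K) :=
      not_mem_verts_gad (hvK p (List.mem_cons_self)).1 h1f h1s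
    have hM2 : p.2 ∉ verts (Gad L K) :=
      not_mem_verts_gad (hvK p (List.mem_cons_self)).2 h2f h2s
    rw [List.length_cons] at hlen
    have hIH : ∀ e' : Finset ℕ, L.length ≤ (e' ∩ O).card →
        Gad L K e' = if (L.map Prod.fst).toFinset ⊆ e' ∧ (e' ∩ O).card = L.length
          then K (e' \ (L.map Prod.fst).toFinset) else 0 :=
      fun e' hle => ih K e' hKO (fun q hq => hys q (List.mem_cons_of_mem _ hq))
        (fun q hq => hcs q (List.mem_cons_of_mem _ hq))
        (fun q hq => hvK q (List.mem_cons_of_mem _ hq)) hndL hle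
    rw [Gad_cons, Finsupp.sub_apply, cone_apply hM1, cone_apply hM2]
    have hterm2 : (if p.2 ∈ e then (Gad L K) (e.erase p.2) else 0) = 0 := by
      by_cases hc : p.2 ∈ e
      · rw [if_pos hc]
        have hA : (e.erase p.2) ∩ O = e ∩ O := by
          ext z
          simp only [Finset.mem_inter, Finset.mem_erase]
          constructor
          · rintro ⟨⟨_, hz1⟩, hz2⟩; exact ⟨hz1, hz2⟩
          · rintro ⟨hz1, hz2⟩
            exact ⟨⟨fun hzc => hcO (hzc ▸ hz2), hz1⟩, hz2⟩
        rw [hIH (e.erase p.2) (by rw [hA]; omega)]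
        rw [if_neg]
        rintro ⟨_, hcd⟩
        rw [hA] at hcd
        omega
      · rw [if_neg hc]
    rw [hterm2, sub_zero]
    simp only [List.map_cons, List.toFinset_cons, List.length_cons]
    by_cases hy : p.1 ∈ e
    · rw [if_pos hy]
      have hB : (e.erase p.1) ∩ O = (e ∩ O).erase p.1 := by
        ext z
        simp only [Finset.mem_inter, Finset.mem_erase]
        tauto
      have hmem : p.1 ∈ e ∩ O := Finset.mem_inter.mpr ⟨hy, hyO⟩
      have hcard' : ((e.erase p.1) ∩ O).card = (e ∩ O).card - 1 := by
        rw [hB, Finset.card_erase_of_mem hmem]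
      rw [hIH (e.erase p.1) (by omega)]
      by_cases hcond : (L.map Prod.fst).toFinset ⊆ e.erase p.1 ∧ ((e.erase p.1) ∩ O).card = L.length
      · rw [if_pos hcond, if_pos ?_]
        · congr 1
          ext z
          simp only [Finset.mem_sdiff, Finset.mem_erase, Finset.mem_insert]
          tauto
        · constructor
          · intro z hz
            rcases Finset.mem_insert.mp hz with rfl | hz
            · exact hy
            · exact Finset.mem_of_mem_erase (hcond.1 hz)
          · omega
      · rw [if_neg hcond, if_neg ?_]
        rintro ⟨hsub, hcd⟩
        apply hcond
        constructor
        · intro z hz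
          refine Finset.mem_erase.mpr ⟨?_, hsub (Finset.mem_insert_of_mem hz)⟩
          intro hzc
          exact h1f (hzc ▸ List.mem_toFinset.mp hz)
        · omega
    · rw [if_neg hy, if_neg]
      rintro ⟨hsub, _⟩
      exact hy (hsub (Finset.mem_insert_self _ _))


/-! ### the invariant sums -/

noncomputable def Phi (O : Finset ℕ) (j : ℕ) (X : Finset ℕ) (H : HG d) : Fin d → ℤ :=
  ∑ Y ∈ O.powersetCard j, H (Y ∪ X)

lemma Phi_sub (O : Finset ℕ) (j : ℕ) (X : Finset ℕ) (H₁ H₂ : HG d) :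
    Phi O j X (H₁ - H₂) = Phi O j X H₁ - Phi O j X H₂ := by
  rw [Phi, Phi, Phi, ← Finset.sum_sub_distrib]
  exact Finset.sum_congr rfl (fun Y _ => by rw [Finsupp.sub_apply])

lemma Phi_finsum {ι : Type*} (O : Finset ℕ) (j : ℕ) (X : Finset ℕ) (s : Finset ι)
    (f : ι → HG d) : Phi O j X (∑ i ∈ s, f i) = ∑ i ∈ s, Phi O j X (f i) := by
  rw [Phi]
  have : ∀ Y : Finset ℕ, (∑ i ∈ s, f i) (Y ∪ X) = ∑ i ∈ s, f i (Y ∪ X) := by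
    intro Y
    rw [Finsupp.finset_sum_apply]
  rw [Finset.sum_congr rfl (fun Y _ => this Y), Finset.sum_comm]
  exact Finset.sum_congr rfl (fun i _ => rfl)

lemma phi_eq_zero_of_mem_not_verts {O : Finset ℕ} {j : ℕ} {X : Finset ℕ} {M : HG d}
    {x : ℕ} (hx : x ∈ X) (hv : x ∉ verts M) : Phi O j X M = 0 := by
  rw [Phi]
  apply Finset.sum_eq_zero
  intro Y _
  exact eval_eq_zero_of_mem_not_verts (Finset.mem_union_right _ hx) hv

lemma phi_cone_new {O : Finset ℕ} {j : ℕ} {X : Finset ℕ} {M : HG d} {c : ℕ}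
    (hcO : c ∉ O) (hcv : c ∉ verts M) :
    Phi O j X (cone c M) = if c ∈ X then Phi O j (X.erase c) M else 0 := by
  rw [Phi]
  have hterm : ∀ Y ∈ O.powersetCard j,
      (cone c M) (Y ∪ X) = if c ∈ X then M (Y ∪ X.erase c) else 0 := by
    intro Y hY
    have hYO : Y ⊆ O := (Finset.mem_powersetCard.mp hY).1
    have hcY : c ∉ Y := fun hc => hcO (hYO hc)
    rw [cone_apply hcv]
    by_cases hcX : c ∈ X
    · rw [if_pos (Finset.mem_union_right _ hcX), if_pos hcX]
      congr 1
      ext z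
      simp only [Finset.mem_erase, Finset.mem_union]
      constructor
      · rintro ⟨hz1, hz2 | hz2⟩
        · exact Or.inl hz2
        · exact Or.inr ⟨hz1, hz2⟩
      · rintro (hz | ⟨hz1, hz2⟩)
        · exact ⟨fun hzc => hcY (hzc ▸ hz), Or.inl hz⟩
        · exact ⟨hz1, Or.inr hz2⟩
    · rw [if_neg (fun hc => (Finset.mem_union.mp hc).elim hcY hcX), if_neg hcX]
  rw [Finset.sum_congr rfl hterm]
  by_cases hcX : c ∈ X
  · simp only [if_pos hcX]
    rfl
  · simp only [if_neg hcX, Finset.sum_const_zero]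

lemma phi_cone_old {O : Finset ℕ} {j : ℕ} {X : Finset ℕ} {M : HG d} {y : ℕ}
    (hyO : y ∈ O) (hyv : y ∉ verts M) (hX : Disjoint X O) :
    Phi O j X (cone y M) = if j = 0 then 0 else Phi O (j - 1) X M := by
  have hyX : y ∉ X := fun hc => Finset.disjoint_left.mp hX hc hyO
  have hterm : ∀ Y ∈ O.powersetCard j,
      (cone y M) (Y ∪ X) = if y ∈ Y then M (Y.erase y ∪ X) else 0 := by
    intro Y hY
    rw [cone_apply hyv]
    by_cases hyY : y ∈ Y
    · rw [if_pos (Finset.mem_union_left _ hyY), if_pos hyY]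
      congr 1
      ext z
      simp only [Finset.mem_erase, Finset.mem_union]
      constructor
      · rintro ⟨hz1, hz2 | hz2⟩
        · exact Or.inl ⟨hz1, hz2⟩
        · exact Or.inr hz2
      · rintro (⟨hz1, hz2⟩ | hz)
        · exact ⟨hz1, Or.inl hz2⟩
        · exact ⟨fun hzc => hyX (hzc ▸ hz), Or.inr hz⟩
    · rw [if_neg (fun hc => (Finset.mem_union.mp hc).elim hyY hyX), if_neg hyY]
  rw [Phi, Finset.sum_congr rfl hterm]
  rcases Nat.eq_zero_or_pos j with rfl | hj
  · rw [if_pos rfl]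
    apply Finset.sum_eq_zero
    intro Y hY
    have : Y = ∅ := Finset.card_eq_zero.mp (Finset.mem_powersetCard.mp hY).2
    rw [if_neg (by rw [this]; exact Finset.notMem_empty y)]
  · rw [if_neg (by omega)]
    rw [Finset.sum_ite, Finset.sum_const_zero, add_zero]
    have hbij : ∑ Y ∈ (O.powersetCard j).filter (fun Y => y ∈ Y), M (Y.erase y ∪ X)
        = ∑ Z ∈ (O.erase y).powersetCard (j - 1), M (Z ∪ X) := by
      apply Finset.sum_bij (i := fun Y _ => Y.erase y)
      · intro Y hY
        simp only [Finset.mem_filter, Finset.mem_powersetCard] at hY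
        obtain ⟨⟨hYO, hYc⟩, hyY⟩ := hY
        rw [Finset.mem_powersetCard]
        constructor
        · intro z hz
          obtain ⟨hz1, hz2⟩ := Finset.mem_erase.mp hz
          exact Finset.mem_erase.mpr ⟨hz1, hYO hz2⟩
        · rw [Finset.card_erase_of_mem hyY, hYc]
      · intro Y₁ hY₁ Y₂ hY₂ heq
        simp only [Finset.mem_filter] at hY₁ hY₂
        have h1 : insert y (Y₁.erase y) = Y₁ := Finset.insert_erase hY₁.2
        have h2 : insert y (Y₂.erase y) = Y₂ := Finset.insert_erase hY₂.2
        rw [← h1, ← h2, heq]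
      · intro Z hZ
        rw [Finset.mem_powersetCard] at hZ
        obtain ⟨hZO, hZc⟩ := hZ
        have hyZ : y ∉ Z := fun hc => (Finset.mem_erase.mp (hZO hc)).1 rfl
        refine ⟨insert y Z, ?_, by rw [Finset.erase_insert hyZ]⟩
        simp only [Finset.mem_filter, Finset.mem_powersetCard]
        refine ⟨⟨?_, ?_⟩, Finset.mem_insert_self _ _⟩
        · intro z hz
          rcases Finset.mem_insert.mp hz with rfl | hz
          · exact hyO
          · exact Finset.mem_of_mem_erase (hZO hz)
        · rw [Finset.card_insert_of_notMem hyZ, hZc]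
          omega
      · intro Y _
        rfl
    rw [hbij, Phi]
    apply Finset.sum_subset
    · exact Finset.powersetCard_mono (Finset.erase_subset _ _)
    · intro Z hZ hZ2
      have hyZ : y ∈ Z := by
        by_contra hyZ
        apply hZ2
        rw [Finset.mem_powersetCard] at hZ ⊢
        refine ⟨?_, hZ.2⟩
        intro z hz
        exact Finset.mem_erase.mpr ⟨fun hc => hyZ (hc ▸ hz), hZ.1 hz⟩
      exact eval_eq_zero_of_mem_not_verts (Finset.mem_union_left _ hyZ) hyv


/-- the invariant sums of a gadget -/
lemma phi_gad (O : Finset ℕ) : ∀ (ps : List (ℕ × ℕ)) (K : HG d) (j : ℕ) (X : Finset ℕ),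
    (∀ f ∈ K.support, Disjoint f O) →
    (∀ p ∈ ps, p.1 ∈ O) → (∀ p ∈ ps, p.2 ∉ O) →
    (∀ p ∈ ps, p.1 ∉ verts K ∧ p.2 ∉ verts K) →
    (((ps.map Prod.fst) ++ (ps.map Prod.snd)).Nodup) →
    Disjoint X O →
    Phi O j X (Gad ps K) = if j + (X ∩ (ps.map Prod.snd).toFinset).card = ps.length
      then ((-1 : ℤ) ^ (X ∩ (ps.map Prod.snd).toFinset).card) • K (X \ (ps.map Prod.snd).toFinset)
      else 0 := by
  intro ps
  induction ps with
  | nil =>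
    intro K j X hKO _ _ _ _ hX
    simp only [Gad_nil, List.map_nil, List.toFinset_nil, List.length_nil, Finset.inter_empty,
      Finset.card_empty, Nat.add_zero, pow_zero, one_smul, Finset.sdiff_empty]
    rcases Nat.eq_zero_or_pos j with rfl | hj
    · rw [if_pos rfl, Phi, Finset.powersetCard_zero, Finset.sum_singleton, Finset.empty_union]
    · rw [if_neg (by omega), Phi]
      apply Finset.sum_eq_zero
      intro Y hY
      rw [Finset.mem_powersetCard] at hY
      have hYne : Y.Nonempty := Finset.card_pos.mp (by omega)
      obtain ⟨z, hz⟩ := hYne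
      by_contra hne
      have hsup : Y ∪ X ∈ K.support := Finsupp.mem_support_iff.mpr hne
      exact Finset.disjoint_left.mp (hKO _ hsup) (Finset.mem_union_left _ hz) (hY.1 hz)
  | cons p L ih =>
    intro K j X hKO hys hcs hvK hnd hX
    obtain ⟨h12, ⟨h1f, h1s⟩, ⟨h2f, h2s⟩, hndL⟩ := comps_cons_nodup hnd
    have hIH := fun (j' : ℕ) (X' : Finset ℕ) (hX' : Disjoint X' O) =>
      ih K j' X' hKO (fun q hq => hys q (List.mem_cons_of_mem _ hq))
        (fun q hq => hcs q (List.mem_cons_of_mem _ hq))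
        (fun q hq => hvK q (List.mem_cons_of_mem _ hq)) hndL hX'
    have hyO : p.1 ∈ O := hys p (List.mem_cons_self)
    have hcO : p.2 ∉ O := hcs p (List.mem_cons_self)
    have hM1 : p.1 ∉ verts (Gad L K) :=
      not_mem_verts_gad (hvK p (List.mem_cons_self)).1 h1f h1s
    have hM2 : p.2 ∉ verts (Gad L K) :=
      not_mem_verts_gad (hvK p (List.mem_cons_self)).2 h2f h2s
    rw [Gad_cons, Phi_sub, phi_cone_new hcO hM2]
    simp only [List.map_cons, List.toFinset_cons, List.length_cons]
    by_cases hc : p.2 ∈ X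
    · rw [if_pos hc]
      have hT1 : Phi O j X (cone p.1 (Gad L K)) = 0 := by
        apply phi_eq_zero_of_mem_not_verts hc
        intro hv
        rcases Finset.mem_insert.mp (verts_cone_subset _ _ hv) with h | h
        · exact h12 h.symm
        · exact hM2 h
      rw [hT1, hIH j (X.erase p.2) (Finset.disjoint_of_subset_left (Finset.erase_subset _ _) hX)]
      have hc2L : p.2 ∉ (L.map Prod.snd).toFinset := fun h => h2s (List.mem_toFinset.mp h)
      have hint : X ∩ insert p.2 (L.map Prod.snd).toFinset
          = insert p.2 (X.erase p.2 ∩ (L.map Prod.snd).toFinset) := by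
        ext z
        simp only [Finset.mem_inter, Finset.mem_insert, Finset.mem_erase]
        constructor
        · rintro ⟨hz1, rfl | hz2⟩
          · exact Or.inl rfl
          · by_cases hzc : z = p.2
            · exact Or.inl hzc
            · exact Or.inr ⟨⟨hzc, hz1⟩, hz2⟩
        · rintro (rfl | ⟨⟨hz1, hz2⟩, hz3⟩)
          · exact ⟨hc, Or.inl rfl⟩
          · exact ⟨hz2, Or.inr hz3⟩
      have hnotin : p.2 ∉ X.erase p.2 ∩ (L.map Prod.snd).toFinset := by
        rw [Finset.mem_inter]
        rintro ⟨h, _⟩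
        exact Finset.notMem_erase _ _ h
      have hcard : (X ∩ insert p.2 (L.map Prod.snd).toFinset).card
          = (X.erase p.2 ∩ (L.map Prod.snd).toFinset).card + 1 := by
        rw [hint, Finset.card_insert_of_notMem hnotin]
      have hsdiff : X \ insert p.2 (L.map Prod.snd).toFinset
          = X.erase p.2 \ (L.map Prod.snd).toFinset := by
        ext z
        simp only [Finset.mem_sdiff, Finset.mem_insert, Finset.mem_erase]
        tauto
      rw [hcard, hsdiff]
      by_cases hcond : j + ((X.erase p.2 ∩ (L.map Prod.snd).toFinset).card) = L.length
      · rw [if_pos hcond, if_pos (by omega)]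
        rw [zero_sub, pow_succ, mul_comm, mul_smul, neg_one_smul]
      · rw [if_neg hcond, if_neg (by omega)]
        rw [zero_sub, neg_zero]
    · rw [if_neg hc, sub_zero]
      have hintX : X ∩ insert p.2 (L.map Prod.snd).toFinset = X ∩ (L.map Prod.snd).toFinset := by
        ext z
        simp only [Finset.mem_inter, Finset.mem_insert]
        constructor
        · rintro ⟨hz1, rfl | hz2⟩
          · exact absurd hz1 hc
          · exact ⟨hz1, hz2⟩
        · rintro ⟨hz1, hz2⟩
          exact ⟨hz1, Or.inr hz2⟩
      have hsdiffX : X \ insert p.2 (L.map Prod.snd).toFinset = X \ (L.map Prod.snd).toFinset := by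
        ext z
        simp only [Finset.mem_sdiff, Finset.mem_insert]
        constructor
        · rintro ⟨hz1, hz2⟩
          exact ⟨hz1, fun h => hz2 (Or.inr h)⟩
        · rintro ⟨hz1, hz2⟩
          refine ⟨hz1, ?_⟩
          rintro (rfl | h)
          exacts [hc hz1, hz2 h]
      rw [phi_cone_old hyO hM1 hX, hintX, hsdiffX]
      rcases Nat.eq_zero_or_pos j with rfl | hj
      · rw [if_pos rfl, if_neg]
        have hle : (X ∩ (L.map Prod.snd).toFinset).card ≤ L.length := by
          calc (X ∩ (L.map Prod.snd).toFinset).card ≤ (L.map Prod.snd).toFinset.card :=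
            Finset.card_le_card (Finset.inter_subset_right)
          _ ≤ (L.map Prod.snd).length := (L.map Prod.snd).toFinset_card_le
          _ = L.length := List.length_map _
        omega
      · rw [if_neg (by omega), hIH (j - 1) X hX]
        by_cases hcond : (j - 1) + (X ∩ (L.map Prod.snd).toFinset).card = L.length
        · rw [if_pos hcond, if_pos (by omega)]
        · rw [if_neg hcond, if_neg (by omega)]


lemma isHG_smul {k : ℕ} {c : ℤ} {M : HG d} (h : IsHG k M) : IsHG k (c • M) := by
  intro e he
  apply h
  rw [Finsupp.mem_support_iff] at he ⊢
  intro hc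
  apply he
  rw [Finsupp.smul_apply, hc, smul_zero]

lemma isHG_finsum {k : ℕ} {ι : Type*} {s : Finset ι} {f : ι → HG d}
    (h : ∀ i ∈ s, IsHG k (f i)) : IsHG k (∑ i ∈ s, f i) := by
  classical
  induction s using Finset.induction_on with
  | empty => intro e he; simp at he
  | @insert a s' hx ih =>
    rw [Finset.sum_insert hx]
    intro e he
    rcases Finset.mem_union.mp (Finsupp.support_add he) with h1 | h1
    · exact h a (Finset.mem_insert_self _ _) e h1
    · exact ih (fun i hi => h i (Finset.mem_insert_of_mem hi)) e h1

theorem master (k : ℕ) : ∀ 𝒢 : Set (HG d), (∀ G ∈ 𝒢, IsHG k G) →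
    ∀ H : HG d, IsHG k H → IsLocal 𝒢 H → H ∈ SE 𝒢 := by
  induction k using Nat.strong_induction_on with
  | _ k IHk =>
  intro 𝒢 h𝒢 H hH hloc
  -- phase 0 : reduce to total weight zero
  have h0 : weight ∅ H ∈ LL 𝒢 0 := by
    have := hloc ∅
    rwa [Finset.card_empty] at this
  obtain ⟨n, c, g, hsum⟩ := (Submodule.mem_span_set' (R := ℤ)).mp h0
  choose Gi hGi Xi hXiv hXic hwi using fun i => (g i).2
  have hXi : ∀ i, (Xi i) = ∅ := fun i => Finset.card_eq_zero.mp (hXic i)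
  have hGsum : (∑ i, c i • Gi i) ∈ SE 𝒢 :=
    Submodule.sum_mem _ fun i _ => Submodule.smul_mem _ _ (mem_SE_of_mem (hGi i))
  set H₀ : HG d := H - ∑ i, c i • Gi i with hH₀
  have hH₀loc : IsLocal 𝒢 H₀ := isLocal_sub hloc (isLocal_of_mem_SE hGsum)
  have hH₀HG : IsHG k H₀ :=
    isHG_sub hH (isHG_finsum (fun i _ => isHG_smul (h𝒢 _ (hGi i))))
  have htot : weight ∅ H₀ = 0 := by
    rw [hH₀, weight_sub]
    have hws : weight ∅ (∑ i, c i • Gi i) = ∑ i, c i • weight ∅ (Gi i) := by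
      rw [weight_eq_weightL, map_sum]
      exact Finset.sum_congr rfl (fun i _ => by rw [map_smul, ← weight_eq_weightL])
    rw [hws]
    have : ∀ i, weight ∅ (Gi i) = (g i : Fin d → ℤ) := by
      intro i
      rw [hwi i, hXi i]
    rw [Finset.sum_congr rfl (fun i _ => by rw [this i]), hsum, sub_self]
  suffices hs : H₀ ∈ SE 𝒢 by
    have heq : H = H₀ + ∑ i, c i • Gi i := by rw [hH₀, sub_add_cancel]
    rw [heq]
    exact Submodule.add_mem _ hs hGsum
  set O := verts H₀ with hO
  have hO0 : ∀ e ∈ H₀.support, e ⊆ O := fun e he => subset_verts he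
  -- initial invariant
  have hinv : ∀ j X, Disjoint X O → Phi O j X H₀ = 0 := by
    intro j X hX
    rcases Finset.eq_empty_or_nonempty X with rfl | ⟨x, hx⟩
    · rw [Phi]
      have hterm : ∀ Y ∈ O.powersetCard j, H₀ (Y ∪ ∅) = H₀ Y := by
        intro Y _
        rw [Finset.union_empty]
      rw [Finset.sum_congr rfl hterm]
      by_cases hj : j = k
      · rw [hj]
        have hsup : H₀.support ⊆ O.powersetCard k := by
          intro e he
          rw [Finset.mem_powersetCard]
          exact ⟨hO0 e he, hH₀HG e he⟩
        rw [← Finset.sum_subset hsup (fun e _ he2 => Finsupp.notMem_support_iff.mp he2)]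
        rw [← htot, weight]
        rw [Finset.filter_true_of_mem (fun e _ => Finset.empty_subset e)]
      · apply Finset.sum_eq_zero
        intro Y hY
        rw [Finset.mem_powersetCard] at hY
        by_contra hne
        have := hH₀HG Y (Finsupp.mem_support_iff.mpr hne)
        omega
    · apply phi_eq_zero_of_mem_not_verts hx
      exact fun hc => Finset.disjoint_left.mp hX hx hc
  -- the staged reduction
  have aux : ∀ m : ℕ, ∀ H' : HG d, IsHG k H' →
      (∀ e ∈ H'.support, (e ∩ O).card ≤ m) → IsLocal 𝒢 H' →
      (∀ j X, Disjoint X O → Phi O j X H' = 0) → H' ∈ SE 𝒢 := by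
    intro m
    induction m with
    | zero =>
      intro H' _ hold _ hinv'
      have hzero : H' = 0 := by
        ext e i
        by_contra hne
        have hes : e ∈ H'.support := by
          rw [Finsupp.mem_support_iff]
          intro hc
          rw [hc] at hne
          exact hne (by rfl)
        have hdisj : Disjoint e O := by
          rw [Finset.disjoint_left]
          intro x hx hxO
          have hmm : x ∈ e ∩ O := Finset.mem_inter.mpr ⟨hx, hxO⟩
          have h2 := hold e hes
          rw [Nat.le_zero, Finset.card_eq_zero] at h2
          rw [h2] at hmm
          exact Finset.notMem_empty x hmm
        have := hinv' 0 e hdisj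
        rw [Phi, Finset.powersetCard_zero, Finset.sum_singleton, Finset.empty_union] at this
        rw [this] at hne
        exact hne rfl
      rw [hzero]
      exact Submodule.zero_mem _
    | succ m ihm =>
      intro H' hHG' hold hloc' hinv'
      classical
      set 𝒴 : Finset (Finset ℕ) :=
        (H'.support.image (· ∩ O)).filter (fun Y => Y.card = m + 1) with h𝒴
      have h𝒴mem : ∀ Y, Y ∈ 𝒴 ↔ ((∃ e ∈ H'.support, e ∩ O = Y) ∧ Y.card = m + 1) := by
        intro Y
        rw [h𝒴, Finset.mem_filter, Finset.mem_image]
      have h𝒴sub : ∀ Y ∈ 𝒴, Y ⊆ O ∧ Y.card = m + 1 := by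
        intro Y hY
        obtain ⟨⟨e, he, rfl⟩, hY2⟩ := (h𝒴mem Y).mp hY
        exact ⟨Finset.inter_subset_right, hY2⟩
      have h𝒴k : ∀ Y ∈ 𝒴, m + 1 ≤ k := by
        intro Y hY
        obtain ⟨⟨e, he, rfl⟩, hY2⟩ := (h𝒴mem Y).mp hY
        have h1 : (e ∩ O).card ≤ e.card := Finset.card_le_card Finset.inter_subset_left
        have h2 := hHG' e he
        omega
      set N : ℕ := (O ∪ verts H').sup id + 1 with hN
      have hNfresh : ∀ x ∈ O ∪ verts H', x < N := by
        intro x hx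
        have h1 := Finset.le_sup (f := id) hx
        simp only [id_eq] at h1
        omega
      set cs : List ℕ := (List.range (m + 1)).map (fun i => N + i) with hcs
      have hcs_len : cs.length = m + 1 := by simp [hcs]
      have hcs_nodup : cs.Nodup := by
        rw [hcs]
        exact List.Nodup.map (fun a b h => by omega) List.nodup_range
      have hcs_ge : ∀ x ∈ cs, N ≤ x := by
        intro x hx
        rw [hcs] at hx
        obtain ⟨i, _, rfl⟩ := List.mem_map.mp hx
        omega
      have hcs_notO : ∀ x ∈ cs, x ∉ O := fun x hx hO' => by
        have h1 := hNfresh x (Finset.mem_union_left _ hO')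
        have h2 := hcs_ge x hx
        omega
      have hcs_notverts : ∀ x ∈ cs, x ∉ verts H' := fun x hx hv => by
        have h1 := hNfresh x (Finset.mem_union_right _ hv)
        have h2 := hcs_ge x hx
        omega
      set ps : Finset ℕ → List (ℕ × ℕ) := fun Y => (Y.sort (· ≤ ·)).zip cs with hps
      have hsortlen : ∀ Y ∈ 𝒴, (Y.sort (· ≤ ·)).length = m + 1 := fun Y hY => by
        rw [Finset.length_sort]; exact (h𝒴sub Y hY).2
      have hmapfst : ∀ Y ∈ 𝒴, ((ps Y).map Prod.fst) = Y.sort (· ≤ ·) := fun Y hY => by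
        rw [hps]
        exact List.map_fst_zip (by rw [hsortlen Y hY, hcs_len])
      have hmapsnd : ∀ Y ∈ 𝒴, ((ps Y).map Prod.snd) = cs := fun Y hY => by
        rw [hps]
        exact List.map_snd_zip (by rw [hsortlen Y hY, hcs_len])
      have hpslen : ∀ Y ∈ 𝒴, (ps Y).length = m + 1 := fun Y hY => by
        rw [hps]
        simp only [List.length_zip, hcs_len]
        rw [hsortlen Y hY]
        omega
      have hpmem : ∀ Y ∈ 𝒴, ∀ p ∈ ps Y, p.1 ∈ Y ∧ p.2 ∈ cs := by
        intro Y hY p hp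
        constructor
        · have h1 : p.1 ∈ (ps Y).map Prod.fst := List.mem_map_of_mem hp
          rw [hmapfst Y hY] at h1
          exact (Finset.mem_sort _).mp h1
        · have h1 : p.2 ∈ (ps Y).map Prod.snd := List.mem_map_of_mem hp
          rw [hmapsnd Y hY] at h1
          exact h1
      have hndY : ∀ Y ∈ 𝒴, (((ps Y).map Prod.fst) ++ ((ps Y).map Prod.snd)).Nodup := by
        intro Y hY
        rw [hmapfst Y hY, hmapsnd Y hY]
        apply List.Nodup.append (Finset.sort_nodup _ _) hcs_nodup
        intro x hx1 hx2
        have hxY : x ∈ Y := (Finset.mem_sort _).mp hx1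
        have hxO : x ∈ O := (h𝒴sub Y hY).1 hxY
        have h1 := hNfresh x (Finset.mem_union_left _ hxO)
        have h2 := hcs_ge x hx2
        omega
      have hJO : ∀ Y ∈ 𝒴, ∀ f ∈ (mlink Y H').support, Disjoint f O := by
        intro Y hY f hf
        obtain ⟨hdisj, hsup⟩ := mem_support_mlink.mp hf
        have hsubY : Y ⊆ (f ∪ Y) ∩ O := fun z hz =>
          Finset.mem_inter.mpr ⟨Finset.mem_union_right _ hz, (h𝒴sub Y hY).1 hz⟩
        have hcardle : ((f ∪ Y) ∩ O).card ≤ m + 1 := hold _ hsup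
        have hcap : Y = (f ∪ Y) ∩ O :=
          Finset.eq_of_subset_of_card_le hsubY (by rw [(h𝒴sub Y hY).2]; exact hcardle)
        rw [Finset.disjoint_left]
        intro x hxf hxO
        have hmem2 : x ∈ (f ∪ Y) ∩ O :=
          Finset.mem_inter.mpr ⟨Finset.mem_union_left _ hxf, hxO⟩
        rw [← hcap] at hmem2
        exact Finset.disjoint_left.mp hdisj hxf hmem2
      have hJverts : ∀ Y ∈ 𝒴, ∀ p ∈ ps Y, p.1 ∉ verts (mlink Y H') ∧ p.2 ∉ verts (mlink Y H') := by
        intro Y hY p hp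
        obtain ⟨hp1, hp2⟩ := hpmem Y hY p hp
        constructor
        · intro hc
          exact Finset.disjoint_left.mp (verts_mlink_disjoint Y H') hc hp1
        · intro hc
          exact hcs_notverts _ hp2 (verts_mlink_subset _ _ hc)
      have hysO : ∀ Y ∈ 𝒴, ∀ p ∈ ps Y, p.1 ∈ O :=
        fun Y hY p hp => (h𝒴sub Y hY).1 (hpmem Y hY p hp).1
      have hcsOY : ∀ Y ∈ 𝒴, ∀ p ∈ ps Y, p.2 ∉ O :=
        fun Y hY p hp => hcs_notO _ (hpmem Y hY p hp).2
      have hJHG : ∀ Y ∈ 𝒴, IsHG (k - (m + 1)) (mlink Y H') :=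
        fun Y hY => mlink_isHG hHG' (h𝒴sub Y hY).2
      have hJloc : ∀ Y ∈ 𝒴, IsLocal ((LinkFam (d := d))^[m + 1] 𝒢) (mlink Y H') := by
        intro Y hY Z
        by_cases hdisj : Disjoint Z Y
        · rw [weight_mlink hdisj]
          have hcard : (Z ∪ Y).card = Z.card + (m + 1) := by
            rw [Finset.card_union_of_disjoint hdisj, (h𝒴sub Y hY).2]
          have h1 : weight (Z ∪ Y) H' ∈ LL 𝒢 ((Z ∪ Y).card) := hloc' _
          rw [hcard] at h1
          exact LL_shift_iter (m + 1) Z.card h1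
        · rw [weight_mlink_not_disjoint hdisj]
          exact Submodule.zero_mem _
      have hJSE : ∀ Y ∈ 𝒴, mlink Y H' ∈ SE ((LinkFam (d := d))^[m + 1] 𝒢) := by
        intro Y hY
        have hk1 : m + 1 ≤ k := h𝒴k Y hY
        exact IHk (k - (m + 1)) (by omega) _ (linkFam_iter_isHG (m + 1) h𝒢) _
          (hJHG Y hY) (hJloc Y hY)
      have hGadSE : ∀ Y ∈ 𝒴, Gad (ps Y) (mlink Y H') ∈ SE 𝒢 := by
        intro Y hY
        apply gad_mem_SE
        · rw [hpslen Y hY]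
          exact hJSE Y hY
        · exact hndY Y hY
        · exact hJverts Y hY
      set Gsum : HG d := ∑ Y ∈ 𝒴, Gad (ps Y) (mlink Y H') with hGsumdef
      have hGsumSE : Gsum ∈ SE 𝒢 := Submodule.sum_mem _ (fun Y hY => hGadSE Y hY)
      set H'' : HG d := H' - Gsum with hH''def
      suffices hs2 : H'' ∈ SE 𝒢 by
        have heq2 : H' = H'' + Gsum := by rw [hH''def, sub_add_cancel]
        rw [heq2]
        exact Submodule.add_mem _ hs2 hGsumSE
      have hgadeval : ∀ Y ∈ 𝒴, ∀ e : Finset ℕ, m + 1 ≤ (e ∩ O).card →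
          Gad (ps Y) (mlink Y H') e = if Y ⊆ e ∧ (e ∩ O).card = m + 1
            then (mlink Y H') (e \ Y) else 0 := by
        intro Y hY e he
        have h1 := gad_apply O (ps Y) (mlink Y H') e (hJO Y hY) (hysO Y hY) (hcsOY Y hY)
          (hJverts Y hY) (hndY Y hY) (by rw [hpslen Y hY]; exact he)
        rw [hmapfst Y hY, Finset.sort_toFinset, hpslen Y hY] at h1
        exact h1
      apply ihm H''
      · -- uniformity
        apply isHG_sub hHG'
        rw [hGsumdef]
        apply isHG_finsum
        intro Y hY
        have h1 := gad_isHG (ps Y) (mlink Y H') (hJHG Y hY) (hndY Y hY) (hJverts Y hY)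
        rw [hpslen Y hY, Nat.sub_add_cancel (h𝒴k Y hY)] at h1
        exact h1
      · -- old-degree bound decreases
        intro e he
        by_contra hbig
        push_neg at hbig
        have hge : m + 1 ≤ (e ∩ O).card := hbig
        have heval : H'' e = 0 := by
          rw [hH''def, Finsupp.sub_apply, hGsumdef, Finsupp.finset_sum_apply]
          have hterm : ∀ Y ∈ 𝒴, Gad (ps Y) (mlink Y H') e
              = if Y = e ∩ O ∧ (e ∩ O).card = m + 1 then H' e else 0 := by
            intro Y hY
            rw [hgadeval Y hY e hge]
            by_cases h1 : Y ⊆ e ∧ (e ∩ O).card = m + 1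
            · have hYeO : Y = e ∩ O := by
                apply Finset.eq_of_subset_of_card_le
                · exact fun z hz => Finset.mem_inter.mpr ⟨h1.1 hz, (h𝒴sub Y hY).1 hz⟩
                · rw [h1.2, (h𝒴sub Y hY).2]
              rw [if_pos h1, if_pos ⟨hYeO, h1.2⟩, mlink_apply_of_disjoint Finset.sdiff_disjoint,
                Finset.sdiff_union_of_subset h1.1]
            · rw [if_neg h1, if_neg ?_]
              rintro ⟨rfl, h2⟩
              exact h1 ⟨Finset.inter_subset_left, h2⟩
          rw [Finset.sum_congr rfl hterm]
          by_cases hcard : (e ∩ O).card = m + 1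
          · by_cases hmem : e ∩ O ∈ 𝒴
            · rw [Finset.sum_eq_single_of_mem (e ∩ O) hmem
                (fun Y _ hYne => if_neg
                  (fun hc : Y = e ∩ O ∧ (e ∩ O).card = m + 1 => hYne hc.1)),
                if_pos ⟨rfl, hcard⟩, sub_self]
            · have hH'e : H' e = 0 := by
                by_contra hne
                apply hmem
                rw [h𝒴mem]
                exact ⟨⟨e, Finsupp.mem_support_iff.mpr hne, rfl⟩, hcard⟩
              rw [Finset.sum_eq_zero (fun Y hY => if_neg
                (fun hc : Y = e ∩ O ∧ (e ∩ O).card = m + 1 => hmem (hc.1 ▸ hY))), hH'e,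
                sub_zero]
          · have hH'e : H' e = 0 := by
              by_contra hne
              have h2 := hold e (Finsupp.mem_support_iff.mpr hne)
              omega
            rw [Finset.sum_eq_zero (fun Y hY => if_neg
              (fun hc : Y = e ∩ O ∧ (e ∩ O).card = m + 1 => hcard hc.2)), hH'e, sub_zero]
        exact absurd heval (Finsupp.mem_support_iff.mp he)
      · exact isLocal_sub hloc' (isLocal_of_mem_SE hGsumSE)
      · -- invariant is preserved
        intro j X hX
        rw [hH''def, Phi_sub, hinv' j X hX, hGsumdef, Phi_finsum, zero_sub, neg_eq_zero]
        have hterm : ∀ Y ∈ 𝒴, Phi O j X (Gad (ps Y) (mlink Y H'))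
            = if j + (X ∩ cs.toFinset).card = m + 1
              then ((-1 : ℤ) ^ (X ∩ cs.toFinset).card) • (mlink Y H') (X \ cs.toFinset)
              else 0 := by
          intro Y hY
          have h1 := phi_gad O (ps Y) (mlink Y H') j X (hJO Y hY) (hysO Y hY) (hcsOY Y hY)
            (hJverts Y hY) (hndY Y hY) hX
          rw [hmapsnd Y hY, hpslen Y hY] at h1
          exact h1
        rw [Finset.sum_congr rfl hterm]
        by_cases hcond : j + (X ∩ cs.toFinset).card = m + 1
        · simp only [if_pos hcond]
          rw [← Finset.smul_sum]
          have hXd : Disjoint (X \ cs.toFinset) O :=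
            Finset.disjoint_of_subset_left (Finset.sdiff_subset) hX
          have hterm2 : ∀ Y ∈ 𝒴, (mlink Y H') (X \ cs.toFinset)
              = H' ((X \ cs.toFinset) ∪ Y) := by
            intro Y hY
            exact mlink_apply_of_disjoint
              (Finset.disjoint_of_subset_right ((h𝒴sub Y hY).1) hXd) H'
          rw [Finset.sum_congr rfl hterm2]
          have hsub𝒴 : 𝒴 ⊆ O.powersetCard (m + 1) := by
            intro Y hY
            rw [Finset.mem_powersetCard]
            exact ⟨(h𝒴sub Y hY).1, (h𝒴sub Y hY).2⟩
          have hphi := hinv' (m + 1) (X \ cs.toFinset) hXd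
          rw [Phi] at hphi
          have hconv : ∑ Y ∈ 𝒴, H' ((X \ cs.toFinset) ∪ Y)
              = ∑ Y ∈ O.powersetCard (m + 1), H' (Y ∪ (X \ cs.toFinset)) := by
            rw [Finset.sum_congr rfl (fun Y _ => by rw [Finset.union_comm])]
            apply Finset.sum_subset hsub𝒴
            intro Y hY h𝒴no
            by_contra hne
            have hsupp : Y ∪ (X \ cs.toFinset) ∈ H'.support := Finsupp.mem_support_iff.mpr hne
            rw [Finset.mem_powersetCard] at hY
            apply h𝒴no
            rw [h𝒴mem]
            constructor
            · refine ⟨Y ∪ (X \ cs.toFinset), hsupp, ?_⟩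
              ext z
              simp only [Finset.mem_inter, Finset.mem_union, Finset.mem_sdiff]
              constructor
              · rintro ⟨hz1 | hz1, hz2⟩
                · exact hz1
                · exact absurd hz2 (Finset.disjoint_left.mp hXd (Finset.mem_sdiff.mpr hz1))
              · intro hz
                exact ⟨Or.inl hz, hY.1 hz⟩
            · exact hY.2
          rw [hconv, hphi, smul_zero]
        · simp only [if_neg hcond, Finset.sum_const_zero]
  apply aux k H₀ hH₀HG ?_ hH₀loc hinv
  intro e he
  calc (e ∩ O).card ≤ e.card := Finset.card_le_card (Finset.inter_subset_left)
  _ = k := hH₀HG e he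
  _ ≤ k := le_refl k

end ZS

/-- **Theorem (local characterisation of `ℤ`-solvability).**
For `k, d ≥ 1`, a finite family `𝓗` of `k`-hypergraphs of dimension `d` and a
`k`-hypergraph `H` with vertex set `V`:  `H` is a `ℤ`-sum of hypergraphs
equivalent to members of `𝓗` iff `H` is locally a `ℤ`-sum of `𝓗`, i.e. for
every `X ⊆ V` with `|X| ≤ k` the weight `w_X(H)` lies in the `ℤ`-span of the
weights `w_{X'}(H')` for `H' ∈ 𝓗` and `X'` a subset of the vertices of `H'`
with `|X'| = |X|`. -/
theorem zsum_iff_locally_zsum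
    (k d : ℕ) (hk : 1 ≤ k) (hd : 1 ≤ d)
    (𝓗 : Set (HG d)) (h𝓗fin : 𝓗.Finite) (h𝓗 : ∀ G ∈ 𝓗, IsHG k G)
    (H : HG d) (hH : IsHG k H)
    (V : Finset ℕ) (hV : verts H ⊆ V) :
    H ∈ Zsum (Eqs 𝓗) ↔
      ∀ X : Finset ℕ, X ⊆ V → X.card ≤ k →
        weight X H ∈ Submodule.span ℤ
          {w : Fin d → ℤ | ∃ G ∈ 𝓗, ∃ X' : Finset ℕ,
            X' ⊆ verts G ∧ X'.card = X.card ∧ w = weight X' G} := by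
  rw [ZS.zsum_iff_mem_span]
  constructor
  · intro h X _ _
    exact ZS.isLocal_of_mem_SE h X
  · intro h
    have hloc : ZS.IsLocal 𝓗 H := by
      intro X
      by_cases hV' : X ⊆ V
      · by_cases hk' : X.card ≤ k
        · exact h X hV' hk'
        · rw [ZS.weight_eq_zero_of_no_edge (fun e he hXe => by
            have h1 := Finset.card_le_card hXe
            rw [hH e he] at h1
            omega)]
          exact Submodule.zero_mem _
      · rw [ZS.weight_eq_zero_of_no_edge (fun e he hXe =>
          hV' (fun x hx => hV (ZS.subset_verts he (hXe hx))))]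
        exact Submodule.zero_mem _
    exact ZS.master k 𝓗 h𝓗 H hH hloc
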